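/- arXiv:1008.1553 — 5 statements merged into one kernel-verified Lean document; each statement's English description precedes it below -/
import Mathlib

section
/- Let Ē₁ and Ē₂ be nonzero euclidean lattices with μ_max(Ē₁) ≤ 0 and μ_max(Ē₂) ≤ 0. Then every nonzero vector of E₁ ⊗ E₂ has norm ≥ 1 in (E₁ ⊗ E₂) ⊗ ℝ equipped with the tensor product inner product. -/
noncomputable section

/-- The covolume of a euclidean lattice presented by the Gram matrix `B` of a `ℤ`-basis:
the square root of the Gram determinant. -/
def latVol {ι : Type} [Fintype ι] [DecidableEq ι] (B : Matrix ι ι ℝ) : ℝ :=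
  Real.sqrt B.det

/-- The arithmetic degree of a euclidean lattice: `- log` of its covolume. -/
def latDeg {ι : Type} [Fintype ι] [DecidableEq ι] (B : Matrix ι ι ℝ) : ℝ :=
  - Real.log (latVol B)

/-- The slope of a euclidean lattice: degree divided by rank. -/
def latMu {ι : Type} [Fintype ι] [DecidableEq ι] (B : Matrix ι ι ℝ) : ℝ :=
  latDeg B / (Fintype.card ι)

/-- The Gram matrix (for the induced inner product) of the rank-`s` sublattice whose
`ℤ`-basis consists of the columns of the integer matrix `A`, inside the lattice with
Gram matrix `B`. -/
def inducedGram {ι : Type} [Fintype ι] (B : Matrix ι ι ℝ) {s : ℕ}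
    (A : Matrix ι (Fin s) ℤ) : Matrix (Fin s) (Fin s) ℝ :=
  (A.map (Int.cast : ℤ → ℝ)).transpose * B * A.map (Int.cast : ℤ → ℝ)

/-- The maximal slope `μ_max` of a euclidean lattice: the supremum of the slopes of its
nonzero sublattices (of any rank), each equipped with the induced inner product.  A nonzero
sublattice is presented by a `ℤ`-basis, i.e. by the columns of an integer matrix `A` which
are linearly independent over `ℤ`. -/
def latMuMax {ι : Type} [Fintype ι] [DecidableEq ι] (B : Matrix ι ι ℝ) : ℝ :=
  sSup { m : ℝ | ∃ (s : ℕ) (A : Matrix ι (Fin s) ℤ), 0 < s ∧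
    LinearIndependent ℤ (fun k : Fin s => fun i : ι => A i k) ∧
    m = latMu (inducedGram B A) }

end

open Matrix in
/-- Trace of a real symmetric matrix is the sum of its eigenvalues. -/
lemma aux_trace_eq_sum_eigenvalues {s : ℕ} {C : Matrix (Fin s) (Fin s) ℝ}
    (hC : C.IsHermitian) : C.trace = ∑ i, hC.eigenvalues i := by
  conv_lhs => rw [hC.spectral_theorem, Unitary.conjStarAlgAut_apply]
  rw [Matrix.trace_mul_cycle,
    show (star (hC.eigenvectorUnitary : Matrix (Fin s) (Fin s) ℝ)) *
        (hC.eigenvectorUnitary : Matrix (Fin s) (Fin s) ℝ) = 1 from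
      mem_unitaryGroup_iff'.mp (hC.eigenvectorUnitary).2, one_mul, trace_diagonal]
  simp

open scoped MatrixOrder in
open Matrix in
/-- If `A`, `B` are positive semidefinite with determinants at least one, then
`trace (A * B) ≥ 1`. -/
lemma aux_trace_mul_ge_one {s : ℕ} (hs : 0 < s) {A B : Matrix (Fin s) (Fin s) ℝ}
    (hA : A.PosSemidef) (hB : B.PosSemidef) (hdA : 1 ≤ A.det) (hdB : 1 ≤ B.det) :
    1 ≤ (A * B).trace := by
  set S := CFC.sqrt A with hSdef
  have hS : S.PosSemidef := (CFC.sqrt_nonneg A).posSemidef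
  have hSS : S * S = A := CFC.sqrt_mul_sqrt_self A hA.nonneg
  have hSH : Sᴴ = S := hS.isHermitian
  have hC : (S * B * S).PosSemidef := by
    have := hB.conjTranspose_mul_mul_same S
    rwa [hSH] at this
  have htr : (S * B * S).trace = (A * B).trace := by
    rw [Matrix.trace_mul_cycle, hSS]
  have hdet : 1 ≤ (S * B * S).det := by
    have h : (S * B * S).det = A.det * B.det := by
      rw [Matrix.det_mul, Matrix.det_mul, ← hSS, Matrix.det_mul]; ring
    rw [h]; nlinarith
  have hH : (S * B * S).IsHermitian := hC.isHermitian
  have hnn : ∀ i, 0 ≤ hH.eigenvalues i := fun i => hC.eigenvalues_nonneg i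
  have hsum : (S * B * S).trace = ∑ i, hH.eigenvalues i := aux_trace_eq_sum_eigenvalues hH
  have hprod : (S * B * S).det = ∏ i, hH.eigenvalues i := by
    have := hH.det_eq_prod_eigenvalues
    simpa using this
  rw [← htr]
  by_contra hlt
  push_neg at hlt
  have ht0 : 0 ≤ (S * B * S).trace := by
    rw [hsum]; exact Finset.sum_nonneg fun i _ => hnn i
  have hle : ∀ i, hH.eigenvalues i ≤ (S * B * S).trace := by
    intro i
    rw [hsum]
    exact Finset.single_le_sum (fun j _ => hnn j) (Finset.mem_univ i)
  have h1 : (1 : ℝ) ≤ ((S * B * S).trace) ^ s := by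
    calc (1:ℝ) ≤ (S * B * S).det := hdet
    _ = ∏ i, hH.eigenvalues i := hprod
    _ ≤ ∏ _i : Fin s, (S * B * S).trace :=
        Finset.prod_le_prod (fun i _ => hnn i) (fun i _ => hle i)
    _ = ((S * B * S).trace) ^ s := by
        rw [Finset.prod_const, Finset.card_univ, Fintype.card_fin]
  have : ((S * B * S).trace) ^ s < 1 := pow_lt_one₀ ht0 hlt hs.ne'
  linarith

/-- Permuting four nested finite sums. -/
lemma aux_sum_perm4 {α : Type*} [AddCommMonoid α] {n₁ n₂ n₃ n₄ : ℕ}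
    (f : Fin n₁ → Fin n₂ → Fin n₃ → Fin n₄ → α) :
    ∑ i, ∑ j, ∑ k, ∑ l, f i j k l = ∑ j, ∑ l, ∑ k, ∑ i, f i j k l := by
  conv_lhs => rw [Finset.sum_comm]
  conv_lhs => enter [2, j]; rw [Finset.sum_comm]
  conv_lhs => enter [2, j, 2, k]; rw [Finset.sum_comm]
  conv_lhs => enter [2, j]; rw [Finset.sum_comm]

open Matrix in
/-- The quadratic form of a Kronecker product evaluated at a "vectorized" matrix `Y`
is the trace `tr (Yᵀ B₁ Y B₂ᵀ)`. -/
lemma aux_kron_qform {r₁ r₂ : ℕ} (B₁ : Matrix (Fin r₁) (Fin r₁) ℝ)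
    (B₂ : Matrix (Fin r₂) (Fin r₂) ℝ) (Y : Matrix (Fin r₁) (Fin r₂) ℝ) :
    (fun p : Fin r₁ × Fin r₂ => Y p.1 p.2) ⬝ᵥ
      (Matrix.kroneckerMap (· * ·) B₁ B₂).mulVec (fun p : Fin r₁ × Fin r₂ => Y p.1 p.2)
      = (Yᵀ * B₁ * Y * B₂ᵀ).trace := by
  simp only [dotProduct, mulVec, Matrix.trace, Matrix.diag, Matrix.mul_apply,
    kroneckerMap_apply, transpose_apply, Fintype.sum_prod_type, Finset.sum_mul, Finset.mul_sum]
  rw [aux_sum_perm4 (fun i j i' j' => Y i j * (B₁ i i' * B₂ j j' * Y i' j'))]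
  refine Finset.sum_congr rfl fun j _ => Finset.sum_congr rfl fun j' _ =>
    Finset.sum_congr rfl fun i' _ => Finset.sum_congr rfl fun i _ => by ring

open Matrix in
/-- Integer rank factorization: any integer matrix `X` factors as `U * Vᵀ` where the columns
of `U` and of `V` are linearly independent over `ℤ`. -/
lemma aux_exists_factorization {r₁ r₂ : ℕ} (X : Matrix (Fin r₁) (Fin r₂) ℤ) :
    ∃ (s : ℕ) (U : Matrix (Fin r₁) (Fin s) ℤ) (V : Matrix (Fin r₂) (Fin s) ℤ),
      LinearIndependent ℤ (fun k : Fin s => fun i => U i k) ∧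
      LinearIndependent ℤ (fun k : Fin s => fun j => V j k) ∧
      X = U * Vᵀ := by
  classical
  set col : Fin r₂ → (Fin r₁ → ℤ) := fun j i => X i j with hcol
  set N : Submodule ℤ (Fin r₁ → ℤ) := Submodule.span ℤ (Set.range col) with hN
  obtain ⟨s, b⟩ := Submodule.basisOfPid (Pi.basisFun ℤ (Fin r₁)) N
  have hmem : ∀ j, col j ∈ N := fun j => Submodule.subset_span ⟨j, rfl⟩
  refine ⟨s, Matrix.of (fun i k => (b k : Fin r₁ → ℤ) i),
    Matrix.of (fun j k => b.repr ⟨col j, hmem j⟩ k), ?_, ?_, ?_⟩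
  · exact b.linearIndependent.map' N.subtype N.ker_subtype
  · rw [Fintype.linearIndependent_iff]
    intro c hc
    have hc' : ∀ j, ∑ k, c k * b.repr ⟨col j, hmem j⟩ k = 0 := by
      intro j
      have := congrFun hc j
      simpa [Finset.sum_apply] using this
    set L : N →ₗ[ℤ] ℤ := ∑ k, c k • ((Finsupp.lapply k).comp b.repr.toLinearMap) with hLdef
    have hL : ∀ y : N, L y = ∑ k, c k * b.repr y k := by
      intro y
      simp [hLdef, LinearMap.sum_apply, Finsupp.lapply_apply, smul_eq_mul]
    have hL0 : ∀ y : N, L y = 0 := by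
      rintro ⟨yv, hy⟩
      refine Submodule.span_induction (p := fun x hx => L ⟨x, hx⟩ = 0) ?_ ?_ ?_ ?_ hy
      · rintro x ⟨j, rfl⟩
        rw [hL]; exact hc' j
      · exact map_zero L
      · intro x y hx hy hpx hpy
        rw [show (⟨x + y, N.add_mem hx hy⟩ : N) = ⟨x, hx⟩ + ⟨y, hy⟩ from rfl,
          map_add, hpx, hpy, add_zero]
      · intro a x hx hpx
        rw [show (⟨a • x, N.smul_mem a hx⟩ : N) = a • (⟨x, hx⟩ : N) from rfl,
          _root_.map_smul, hpx, smul_zero]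
    intro k₀
    have h := hL0 (b k₀)
    rw [hL] at h
    simpa [Module.Basis.repr_self, Finsupp.single_apply] using h
  · ext i j
    have h := congrArg (fun (y : N) => (y : Fin r₁ → ℤ) i) (b.sum_repr ⟨col j, hmem j⟩)
    simp only [AddSubmonoidClass.coe_finset_sum, Finset.sum_apply, SetLike.val_smul,
      Pi.smul_apply, smul_eq_mul] at h
    rw [Matrix.mul_apply]
    simp only [Matrix.of_apply, transpose_apply]
    change col j i = _
    rw [← h]
    exact Finset.sum_congr rfl fun k _ => mul_comm _ _

open Matrix in
/-- Let `Ē₁`, `Ē₂` be nonzero euclidean lattices (presented by positive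
definite Gram matrices `B₁`, `B₂`) with `μ_max(Ē₁) ≤ 0` and `μ_max(Ē₂) ≤ 0`
(equivalently: every nonzero sublattice, with the induced inner product, has covolume `≥ 1`).
Then every nonzero vector `x` of `E₁ ⊗ E₂` (an integer vector in the tensor product basis)
has norm `≥ 1` for the tensor product inner product, whose Gram matrix is the Kronecker
product of `B₁` and `B₂`. -/
theorem tensor_norm_ge_one (r₁ r₂ : ℕ) (h₁ : 0 < r₁) (h₂ : 0 < r₂)
    (B₁ : Matrix (Fin r₁) (Fin r₁) ℝ) (B₂ : Matrix (Fin r₂) (Fin r₂) ℝ)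
    (hB₁ : B₁.PosDef) (hB₂ : B₂.PosDef)
    (hmax₁ : ∀ (s : ℕ) (A : Matrix (Fin r₁) (Fin s) ℤ), 0 < s →
      LinearIndependent ℤ (fun k : Fin s => fun i => A i k) → 1 ≤ latVol (inducedGram B₁ A))
    (hmax₂ : ∀ (s : ℕ) (A : Matrix (Fin r₂) (Fin s) ℤ), 0 < s →
      LinearIndependent ℤ (fun k : Fin s => fun i => A i k) → 1 ≤ latVol (inducedGram B₂ A)) :
    ∀ x : Fin r₁ × Fin r₂ → ℤ, x ≠ 0 →
      1 ≤ Real.sqrt ((fun p => (x p : ℝ)) ⬝ᵥ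
            (Matrix.kroneckerMap (· * ·) B₁ B₂).mulVec (fun p => (x p : ℝ))) := by
  intro x hx
  obtain ⟨s, U, V, hU, hV, hXUV⟩ :=
    aux_exists_factorization (Matrix.of fun i j => x (i, j))
  have hs : 0 < s := by
    rcases Nat.eq_zero_or_pos s with h0 | h
    · exfalso
      apply hx
      funext p
      have h := congrFun (congrFun hXUV p.1) p.2
      subst h0
      simpa [Matrix.mul_apply] using h
    · exact h
  -- real versions
  set Ur : Matrix (Fin r₁) (Fin s) ℝ := U.map (Int.cast : ℤ → ℝ) with hUr
  set Vr : Matrix (Fin r₂) (Fin s) ℝ := V.map (Int.cast : ℤ → ℝ) with hVr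
  have hXr : (Matrix.of fun i j => ((x (i, j) : ℤ) : ℝ)) = Ur * Vrᵀ := by
    ext i j
    have h := congrFun (congrFun hXUV i) j
    simp only [Matrix.of_apply, Matrix.mul_apply, Matrix.transpose_apply] at h
    simp only [Matrix.of_apply, Matrix.mul_apply, Matrix.transpose_apply, hUr, hVr,
      Matrix.map_apply]
    rw [h]
    push_cast
    rfl
  -- rewrite the vector
  have hvec : (fun p : Fin r₁ × Fin r₂ => ((x p : ℤ) : ℝ))
      = fun p : Fin r₁ × Fin r₂ => (Ur * Vrᵀ) p.1 p.2 := by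
    funext p
    have := congrFun (congrFun hXr p.1) p.2
    simpa using this
  rw [hvec, aux_kron_qform B₁ B₂ (Ur * Vrᵀ)]
  -- symmetry of B₂
  have hB₂symm : B₂ᵀ = B₂ := by
    have := hB₂.isHermitian
    rwa [Matrix.IsHermitian, conjTranspose_eq_transpose_of_trivial] at this
  -- trace manipulation
  have htr : ((Ur * Vrᵀ)ᵀ * B₁ * (Ur * Vrᵀ) * B₂ᵀ).trace
      = ((inducedGram B₁ U) * (inducedGram B₂ V)).trace := by
    rw [hB₂symm]
    have h1 : (Ur * Vrᵀ)ᵀ * B₁ * (Ur * Vrᵀ) * B₂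
        = Vr * ((Urᵀ * B₁ * Ur) * (Vrᵀ * B₂)) := by
      rw [Matrix.transpose_mul, Matrix.transpose_transpose]
      simp only [Matrix.mul_assoc]
    rw [h1, Matrix.trace_mul_comm]
    have h2 : (Urᵀ * B₁ * Ur) * (Vrᵀ * B₂) * Vr
        = (inducedGram B₁ U) * (inducedGram B₂ V) := by
      simp only [inducedGram, ← hUr, ← hVr, Matrix.mul_assoc]
    rw [h2]
  rw [htr]
  -- positivity and determinant bounds
  have hGU_psd : (inducedGram B₁ U).PosSemidef := by
    have h := hB₁.posSemidef.conjTranspose_mul_mul_same Ur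
    rwa [conjTranspose_eq_transpose_of_trivial] at h
  have hGV_psd : (inducedGram B₂ V).PosSemidef := by
    have h := hB₂.posSemidef.conjTranspose_mul_mul_same Vr
    rwa [conjTranspose_eq_transpose_of_trivial] at h
  have hdU : 1 ≤ (inducedGram B₁ U).det := by
    have h := hmax₁ s U hs hU
    rwa [latVol, Real.one_le_sqrt] at h
  have hdV : 1 ≤ (inducedGram B₂ V).det := by
    have h := hmax₂ s V hs hV
    rwa [latVol, Real.one_le_sqrt] at h
  rw [Real.one_le_sqrt]
  exact aux_trace_mul_ge_one hs hGU_psd hGV_psd hdU hdV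
end

section
/- Let K be a number field. The orthogonal direct sum Ē₁ ⊥ Ē₂ of two nef hermitian 𝒪_K-lattices is nef. -/
open scoped NumberField ComplexOrder Classical

noncomputable section

/-- The hermitian pairing on complex coordinate vectors determined by the (Gram) matrix `M`:
`⟨u, v⟩ = ∑ conj(uᵢ) · Mᵢⱼ · vⱼ` (antilinear in the first variable). -/
def cForm {ι : Type} [Fintype ι] (M : Matrix ι ι ℂ) (u v : ι → ℂ) : ℂ :=
  ∑ i, ∑ j, (starRingEnd ℂ) (u i) * M i j * v j

/-- The hermitian pairing, at the complex embedding `σ` of `K`, of two `K`-rational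
coordinate vectors, for the metric with Gram matrix `M` at `σ`. -/
def eForm {K : Type} [Field K] {ι : Type} [Fintype ι] (M : Matrix ι ι ℂ)
    (σ : K →+* ℂ) (u v : ι → K) : ℂ :=
  cForm M (fun i => σ (u i)) (fun i => σ (v i))

/-- The arithmetic degree of a (finitely generated) `𝒪_K`-submodule `F` of `K^ι`, for the
hermitian metrics on `K^ι` whose Gram matrix at the complex embedding `σ` is `H σ`, with the
induced metrics on `F`.  It is computed from a `K`-linearly independent family `x` of elements
of `F` spanning the same `K`-subspace as `F`:
`deg F = log #(F / (𝒪_K x₁ + ⋯ + 𝒪_K x_s)) - ∑_σ log ‖x₁ ∧ ⋯ ∧ x_s‖_σ`,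
where `‖x₁ ∧ ⋯ ∧ x_s‖_σ` is the square root of the Gram determinant of `x` at `σ`.
(For `F` of rank one this is the usual `deg F = log #(F/𝒪_K ℓ) - ∑_v ε_v log ‖ℓ‖_v`, the sum
running over all complex embeddings; the general case agrees with `deg F = deg (det F)`,
where `det F = Λ^s F` carries the Gram-determinant metrics.) -/
def hDeg (K : Type) [Field K] [NumberField K] {ι : Type} [Fintype ι]
    (H : (K →+* ℂ) → Matrix ι ι ℂ) (F : Submodule (𝓞 K) (ι → K)) : ℝ :=
  if h : ∃ p : (s : ℕ) × (Fin s → ι → K), 0 < p.1 ∧ (∀ a, p.2 a ∈ F) ∧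
      LinearIndependent K p.2 ∧ ∀ y ∈ F, y ∈ Submodule.span K (Set.range p.2) then
    Real.log (Nat.card
        (↥F ⧸ Submodule.comap F.subtype (Submodule.span (𝓞 K) (Set.range h.choose.2))))
      - ∑ᶠ σ : K →+* ℂ, Real.log (Real.sqrt
          ((Matrix.of fun a b => eForm (H σ) σ (h.choose.2 a) (h.choose.2 b)).det.re))
  else 0

/-- The rank of an `𝒪_K`-submodule `F` of `K^ι`: the dimension of the `K`-subspace
it spans. -/
def hRank (K : Type) [Field K] [NumberField K] {ι : Type} [Fintype ι]
    (F : Submodule (𝓞 K) (ι → K)) : ℕ :=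
  Module.finrank K ↥(Submodule.span K (F : Set (ι → K)))

/-- The slope of a nonzero `𝒪_K`-submodule of `K^ι` with the induced metrics:
degree divided by rank. -/
def hMu (K : Type) [Field K] [NumberField K] {ι : Type} [Fintype ι]
    (H : (K →+* ℂ) → Matrix ι ι ℂ) (F : Submodule (𝓞 K) (ι → K)) : ℝ :=
  hDeg K H F / hRank K F

/-- The maximal slope `μ_max` of the hermitian `𝒪_K`-lattice `E ⊆ K^ι`: the supremum of the
slopes of its nonzero `𝒪_K`-submodules (of any rank), with the induced metrics. -/
def hMuMax (K : Type) [Field K] [NumberField K] {ι : Type} [Fintype ι]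
    (H : (K →+* ℂ) → Matrix ι ι ℂ) (E : Submodule (𝓞 K) (ι → K)) : ℝ :=
  sSup { m : ℝ | ∃ F : Submodule (𝓞 K) (ι → K), F ≠ ⊥ ∧ F ≤ E ∧ m = hMu K H F }

/-- The compatibility of the family of Gram matrices `H` with complex conjugation:
the metric at the conjugate embedding is the conjugate metric (so that the data of `H`
amounts to a euclidean/hermitian metric at each archimedean place of `K`). -/
def ConjCompatible (K : Type) [Field K] {ι : Type} [Fintype ι]
    (H : (K →+* ℂ) → Matrix ι ι ℂ) : Prop :=
  ∀ σ : K →+* ℂ, H ((starRingEnd ℂ).comp σ) = (H σ).map (starRingEnd ℂ)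

/-- The arithmetic degree of a nonzero rank-one hermitian `𝒪_K'`-lattice, presented as a
nonzero finitely generated `𝒪_{K'}`-submodule `L` of `K'` whose metric at the complex
embedding `σ` is `‖y‖_σ² = g σ · |σ(y)|²`:
`deg L = log #(L/𝒪_{K'} ℓ) - ∑_σ log ‖ℓ‖_σ` for a nonzero `ℓ ∈ L`. -/
def degLine (K' : Type) [Field K'] [NumberField K']
    (L : Submodule (𝓞 K') K') (g : (K' →+* ℂ) → ℝ) : ℝ :=
  if h : ∃ x : K', x ∈ L ∧ x ≠ 0 then
    Real.log (Nat.card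
        (↥L ⧸ Submodule.comap L.subtype (Submodule.span (𝓞 K') {h.choose})))
      - ∑ᶠ σ : K' →+* ℂ, Real.log (Real.sqrt (g σ * Complex.normSq (σ h.choose)))
  else 0

/-- The quotient metric induced at the embedding `σ` on a rank-one quotient of the hermitian
lattice `(K'^ι, H')` via the `K'`-linear surjection `ψ : K'^ι → K'`:
`‖1‖² = inf { ⟨e, e⟩_{H' σ} | ψ_σ(e) = 1 }` (infimum over the fibre of `1` in `ℂ^ι`). -/
def quotMetric {K' : Type} [Field K'] {ι : Type} [Fintype ι] [DecidableEq ι]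
    (H' : (K' →+* ℂ) → Matrix ι ι ℂ) (ψ : (ι → K') →ₗ[K'] K') (σ : K' →+* ℂ) : ℝ :=
  sInf { t : ℝ | ∃ e : ι → ℂ, (∑ i, σ (ψ (Pi.single i 1)) * e i) = 1 ∧
    t = (cForm (H' σ) e e).re }

/-- Base change of an `𝒪_K`-lattice `E ⊆ K^ι` to the ring of integers of a finite
extension `K'` of `K`: the `𝒪_{K'}`-span of the image of `E` in `K'^ι`. -/
def baseChange (K K' : Type) [Field K] [NumberField K] [Field K'] [NumberField K']
    [Algebra K K'] {ι : Type} [Fintype ι] (E : Submodule (𝓞 K) (ι → K)) :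
    Submodule (𝓞 K') (ι → K') :=
  Submodule.span (𝓞 K') ((fun v i => algebraMap K K' (v i)) '' (E : Set (ι → K)))

/-- The metrics on the base change to `K'` of a hermitian lattice over `K` with metrics `H`:
the Gram matrix at an embedding `σ'` of `K'` is the Gram matrix of `H` at the induced
embedding of `K`. -/
def baseChangeMetric (K K' : Type) [Field K] [Field K'] [Algebra K K'] {ι : Type}
    (H : (K →+* ℂ) → Matrix ι ι ℂ) : (K' →+* ℂ) → Matrix ι ι ℂ :=
  fun σ' => H (σ'.comp (algebraMap K K'))

/-- A hermitian `𝒪_K`-lattice `E ⊆ K^ι` (with metrics `H`) is nef if for every finite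
extension `K'/K`, every rank-one quotient of `E ⊗_{𝒪_K} 𝒪_{K'}`, with the quotient metrics,
has nonnegative arithmetic degree.  A rank-one quotient is the image of `E ⊗ 𝒪_{K'}` under a
`K'`-linear form `ψ` on `K'^ι` (every rank-one quotient of the full lattice `E ⊗ 𝒪_{K'}`
arises this way, with the quotient metrics given by `quotMetric`). -/
def IsNef (K : Type) [Field K] [NumberField K] {ι : Type} [Fintype ι] [DecidableEq ι]
    (H : (K →+* ℂ) → Matrix ι ι ℂ) (E : Submodule (𝓞 K) (ι → K)) : Prop :=
  ∀ (K' : Type) [Field K'] [NumberField K'] [Algebra K K'],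
    ∀ ψ : (ι → K') →ₗ[K'] K',
      Submodule.map (ψ.restrictScalars (𝓞 K')) (baseChange K K' E) ≠ ⊥ →
      0 ≤ degLine K' (Submodule.map (ψ.restrictScalars (𝓞 K')) (baseChange K K' E))
            (quotMetric (baseChangeMetric K K' H) ψ)

end

noncomputable section Aux
set_option linter.unusedSectionVars false
set_option maxHeartbeats 1000000
set_option synthInstance.maxHeartbeats 100000

open Submodule

/-- Multiplicativity of cardinality of quotients for nested submodules. -/
theorem aux_card_quot_quot {R M : Type*} [Ring R] [AddCommGroup M] [Module R M]
    (N₁ N₂ : Submodule R M) (h : N₁ ≤ N₂) :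
    Nat.card (M ⧸ N₁) = Nat.card (M ⧸ N₂) * Nat.card (N₂ ⧸ N₁.comap N₂.subtype) := by
  have e2 : (N₂ ⧸ N₁.comap N₂.subtype) ≃ₗ[R] ↥(N₂.map N₁.mkQ) := by
    have hker : N₁.comap N₂.subtype = LinearMap.ker (N₁.mkQ ∘ₗ N₂.subtype) := by
      rw [LinearMap.ker_comp, Submodule.ker_mkQ]
    exact (Submodule.quotEquivOfEq _ _ hker).trans
      ((N₁.mkQ ∘ₗ N₂.subtype).quotKerEquivRange.trans
        (LinearEquiv.ofEq _ _ (by rw [LinearMap.range_comp, Submodule.range_subtype])))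
  rw [← Submodule.card_quotient_mul_card_quotient N₂ N₁ h, Nat.card_congr e2.toEquiv, mul_comm]

variable {K' : Type} [Field K'] [NumberField K']

/-- The quotient `N₂ ⧸ (N₁ ∩ N₂)`, elaborated generically. -/
abbrev auxQ {R M : Type*} [Ring R] [AddCommGroup M] [Module R M] (N₂ N₁ : Submodule R M) :
    Type _ :=
  N₂ ⧸ N₁.comap N₂.subtype

theorem aux_smul_eq (c : 𝓞 K') (x : K') : c • x = algebraMap (𝓞 K') K' c * x :=
  Algebra.smul_def c x

theorem aux_quot_span_equiv (L : Submodule (𝓞 K') K') {ℓ : K'} (hℓ : ℓ ∈ L) (hℓ0 : ℓ ≠ 0)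
    (c : 𝓞 K') :
    Nat.card (auxQ (comap L.subtype (span (𝓞 K') {ℓ}))
        (comap L.subtype (span (𝓞 K') {algebraMap (𝓞 K') K' c * ℓ})))
      = Nat.card ((𝓞 K') ⧸ Ideal.span {c}) := by
  set N₂ := comap L.subtype (span (𝓞 K') {ℓ}) with hN₂
  set N₁ := comap L.subtype (span (𝓞 K') {algebraMap (𝓞 K') K' c * ℓ}) with hN₁
  have hsmul : ∀ a : 𝓞 K', a • ℓ ∈ L := fun a => L.smul_mem a hℓ
  have hinj : ∀ a a' : 𝓞 K', a • ℓ = a' • ℓ → a = a' := by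
    intro a a' hh
    rw [aux_smul_eq, aux_smul_eq] at hh
    exact NumberField.RingOfIntegers.coe_injective (mul_right_cancel₀ hℓ0 hh)
  let φ : (𝓞 K') →ₗ[𝓞 K'] ↥N₂ :=
    { toFun := fun a => ⟨⟨a • ℓ, hsmul a⟩, by
        simp only [hN₂, Submodule.mem_comap, Submodule.subtype_apply]
        exact Submodule.smul_mem _ a (Submodule.mem_span_singleton_self ℓ)⟩
      map_add' := by intro a b; ext; simp [add_smul]
      map_smul' := by intro a b; ext; simp [mul_smul] }
  have hφinj : Function.Injective φ := by
    intro a a' hh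
    apply hinj
    have := congrArg (fun x : ↥N₂ => (x : ↥L).1) hh
    simpa [φ] using this
  have hφsurj : Function.Surjective φ := by
    rintro ⟨⟨x, hxL⟩, hx⟩
    simp only [hN₂, Submodule.mem_comap, Submodule.subtype_apply] at hx
    obtain ⟨a, ha⟩ := Submodule.mem_span_singleton.mp hx
    exact ⟨a, by ext; simpa [φ] using ha⟩
  let e : (𝓞 K') ≃ₗ[𝓞 K'] ↥N₂ := LinearEquiv.ofBijective φ ⟨hφinj, hφsurj⟩
  have hmap : Submodule.map (e : (𝓞 K') →ₗ[𝓞 K'] ↥N₂) (Ideal.span {c} : Ideal (𝓞 K'))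
      = N₁.comap N₂.subtype := by
    ext x
    simp only [Submodule.mem_map, Submodule.mem_comap]
    constructor
    · rintro ⟨a, ha, rfl⟩
      obtain ⟨b, rfl⟩ := Submodule.mem_span_singleton.mp ha
      simp only [hN₁, Submodule.mem_comap]
      show ((φ (b • c) : ↥L) : K') ∈ span (𝓞 K') {algebraMap (𝓞 K') K' c * ℓ}
      have : ((φ (b • c) : ↥L) : K') = b • (algebraMap (𝓞 K') K' c * ℓ) := by
        simp only [φ, LinearMap.coe_mk, AddHom.coe_mk]
        rw [smul_eq_mul, mul_smul, aux_smul_eq c ℓ]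
      rw [this]
      exact Submodule.smul_mem _ b (Submodule.mem_span_singleton_self _)
    · intro hx
      simp only [hN₁, Submodule.mem_comap] at hx
      obtain ⟨b, hb⟩ := Submodule.mem_span_singleton.mp hx
      refine ⟨b * c, Submodule.mem_span_singleton.mpr ⟨b, by rw [smul_eq_mul]⟩, ?_⟩
      show φ (b * c) = x
      obtain ⟨a, rfl⟩ := hφsurj x
      apply congrArg
      apply hinj
      show (b * c) • ℓ = a • ℓ
      have h2 : L.subtype (N₂.subtype (φ a)) = a • ℓ := rfl
      rw [h2] at hb
      rw [mul_smul, aux_smul_eq c ℓ]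
      exact hb
  have hq := (Submodule.Quotient.equiv (N := ↥N₂) (Ideal.span {c}) (N₁.comap N₂.subtype) e hmap)
  have h2 := Nat.card_congr hq.toEquiv
  unfold auxQ
  rw [h2]

theorem aux_card_quot_smul (L : Submodule (𝓞 K') K') {ℓ : K'} (hℓ : ℓ ∈ L) (hℓ0 : ℓ ≠ 0)
    (c : 𝓞 K') :
    Nat.card (↥L ⧸ comap L.subtype (span (𝓞 K') {algebraMap (𝓞 K') K' c * ℓ})) =
      Nat.card (↥L ⧸ comap L.subtype (span (𝓞 K') {ℓ})) * Ideal.absNorm (Ideal.span {c}) := by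
  have hle : comap L.subtype (span (𝓞 K') {algebraMap (𝓞 K') K' c * ℓ})
      ≤ comap L.subtype (span (𝓞 K') {ℓ}) := by
    apply Submodule.comap_mono
    rw [Submodule.span_le]
    intro x hx
    rw [Set.mem_singleton_iff] at hx
    subst hx
    rw [← aux_smul_eq]
    exact Submodule.smul_mem _ c (Submodule.mem_span_singleton_self ℓ)
  rw [aux_card_quot_quot _ _ hle, aux_quot_span_equiv L hℓ hℓ0 c,
    Ideal.absNorm_apply, Submodule.cardQuot_apply]

theorem aux_card_quot_ne_zero (L : Submodule (𝓞 K') K') (hfg : L.FG) {ℓ : K'} (hℓ : ℓ ∈ L)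
    (hℓ0 : ℓ ≠ 0) :
    Nat.card (↥L ⧸ comap L.subtype (span (𝓞 K') {ℓ})) ≠ 0 := by
  rw [Nat.card_ne_zero]
  refine ⟨⟨0⟩, ?_⟩
  obtain ⟨T, hT⟩ := hfg
  have step : ∀ t : K', ∃ b : 𝓞 K', b ≠ 0 ∧ b • t ∈ span (𝓞 K') {ℓ} := by
    intro t
    obtain ⟨a, b, hb, hab⟩ := IsFractionRing.div_surjective (A := 𝓞 K') (t / ℓ)
    refine ⟨b, nonZeroDivisors.ne_zero hb, ?_⟩
    have hbne : algebraMap (𝓞 K') K' b ≠ 0 :=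
      NumberField.RingOfIntegers.coe_ne_zero_iff.mpr (nonZeroDivisors.ne_zero hb)
    have heq : algebraMap (𝓞 K') K' b * t = algebraMap (𝓞 K') K' a * ℓ := by
      have := (div_eq_div_iff hbne hℓ0).mp hab
      linear_combination -this
    rw [aux_smul_eq, heq, ← aux_smul_eq]
    exact Submodule.smul_mem _ a (Submodule.mem_span_singleton_self ℓ)
  choose bf hbf0 hbfmem using step
  set c : 𝓞 K' := ∏ t ∈ T, bf t with hc
  have hc0 : c ≠ 0 := Finset.prod_ne_zero_iff.mpr fun t _ => hbf0 t
  have hgen : ∀ t ∈ T, c • t ∈ span (𝓞 K') {ℓ} := by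
    intro t ht
    rw [hc, ← Finset.prod_erase_mul T bf ht, mul_smul]
    exact Submodule.smul_mem _ _ (hbfmem t)
  have hall : ∀ x ∈ L, c • x ∈ span (𝓞 K') {ℓ} := by
    intro x hx
    rw [← hT] at hx
    induction hx using Submodule.span_induction with
    | mem t ht => exact hgen t ht
    | zero => rw [smul_zero]; exact Submodule.zero_mem _
    | add y z _ _ hy hz => rw [smul_add]; exact Submodule.add_mem _ hy hz
    | smul r y _ hy => rw [smul_comm]; exact Submodule.smul_mem _ r hy
  set N := comap L.subtype (span (𝓞 K') {ℓ}) with hN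
  have hLfin : Module.Finite (𝓞 K') ↥L := Module.Finite.iff_fg.mpr ⟨T, hT⟩
  obtain ⟨n, g, hg⟩ := Module.Finite.exists_fin (R := 𝓞 K') (M := ↥L ⧸ N)
  have hkill : ∀ q : ↥L ⧸ N, c • q = 0 := by
    intro q
    obtain ⟨x, rfl⟩ := Submodule.Quotient.mk_surjective N q
    rw [← Submodule.Quotient.mk_smul, Submodule.Quotient.mk_eq_zero]
    show L.subtype (c • x) ∈ span (𝓞 K') {ℓ}
    exact hall x.1 x.2
  have hfinq : Finite ((𝓞 K') ⧸ (Ideal.span {c} : Ideal (𝓞 K'))) := by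
    rw [← Ideal.absNorm_ne_zero_iff, Ideal.absNorm_span_singleton]
    simpa using (Algebra.norm_ne_zero_iff (R := ℤ) (S := 𝓞 K')).mpr hc0
  let F : (Fin n → 𝓞 K') → (↥L ⧸ N) := fun v => ∑ i, v i • g i
  have hFs : Function.Surjective F := by
    intro q
    have hq : q ∈ span (𝓞 K') (Set.range g) := hg ▸ Submodule.mem_top
    obtain ⟨v, hv⟩ := (mem_span_range_iff_exists_fun _).mp hq
    exact ⟨v, hv⟩
  have hGs : Function.Surjective
      (fun w : Fin n → (𝓞 K') ⧸ (Ideal.span {c} : Ideal (𝓞 K')) =>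
        F fun i => (w i).out) := by
    intro q
    obtain ⟨v, hv⟩ := hFs q
    refine ⟨fun i => Submodule.Quotient.mk (v i), ?_⟩
    have key : ∀ i : Fin n, ∃ d : 𝓞 K',
        ((Submodule.Quotient.mk (v i) : (𝓞 K') ⧸ (Ideal.span {c} : Ideal (𝓞 K')))).out
          = v i + d * c := by
      intro i
      have h1 : Submodule.Quotient.mk
          ((Submodule.Quotient.mk (v i) : (𝓞 K') ⧸ (Ideal.span {c} : Ideal (𝓞 K'))).out)
          = (Submodule.Quotient.mk (v i) : (𝓞 K') ⧸ (Ideal.span {c} : Ideal (𝓞 K'))) :=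
        Quotient.out_eq' _
      rw [Submodule.Quotient.eq] at h1
      obtain ⟨d, hd⟩ := Submodule.mem_span_singleton.mp h1
      refine ⟨d, ?_⟩
      have : d • c = _ - v i := hd
      rw [smul_eq_mul] at this
      linear_combination -this
    choose d hd using key
    show F (fun i => ((Submodule.Quotient.mk (v i) : (𝓞 K') ⧸ (Ideal.span {c} : Ideal (𝓞 K')))).out) = q
    have : F (fun i => ((Submodule.Quotient.mk (v i) : (𝓞 K') ⧸ (Ideal.span {c} : Ideal (𝓞 K')))).out)
        = F v + ∑ i, d i • (c • g i) := by
      simp only [F]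
      rw [← Finset.sum_add_distrib]
      refine Finset.sum_congr rfl fun i _ => ?_
      rw [hd i, add_smul, smul_smul]
    rw [this, hv]
    simp only [hkill, smul_zero, Finset.sum_const_zero, add_zero]
  exact Finite.of_surjective _ hGs

theorem aux_prod_embeddings (x : K') (hx : x ≠ 0) :
    ∑ σ : K' →+* ℂ, Real.log ‖σ x‖
      = Real.log |((Algebra.norm ℚ x : ℚ) : ℝ)| := by
  have h0 : ‖algebraMap ℚ ℂ (Algebra.norm ℚ x)‖
      = ∏ σ : K' →ₐ[ℚ] ℂ, ‖σ x‖ := by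
    rw [Algebra.norm_eq_prod_embeddings, norm_prod]
  have h1 : (∏ σ : K' →+* ℂ, ‖σ x‖) = |((Algebra.norm ℚ x : ℚ) : ℝ)| :=
    calc (∏ σ : K' →+* ℂ, ‖σ x‖)
        = ∏ φ : K' →ₐ[ℚ] ℂ, ‖φ x‖ :=
          Fintype.prod_equiv (RingHom.equivRatAlgHom K' ℂ) _ _
            (fun σ => by simp [RingHom.equivRatAlgHom_apply])
      _ = ‖algebraMap ℚ ℂ (Algebra.norm ℚ x)‖ := h0.symm
      _ = |((Algebra.norm ℚ x : ℚ) : ℝ)| := by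
          rw [eq_ratCast (algebraMap ℚ ℂ), Complex.norm_ratCast]
  rw [← h1, Real.log_prod]
  intro σ _
  simp only [ne_eq, norm_eq_zero, map_eq_zero]
  exact fun h => hx (σ.injective (by simpa using h))

theorem aux_absNorm_cast (c : 𝓞 K') :
    ((Ideal.absNorm (Ideal.span {c}) : ℕ) : ℝ)
      = |((Algebra.norm ℚ (algebraMap (𝓞 K') K' c) : ℚ) : ℝ)| := by
  rw [Ideal.absNorm_span_singleton, ← Algebra.coe_norm_int]
  push_cast
  rw [Nat.cast_natAbs]
  push_cast
  rfl

/-- The basic degree-type function attached to a nonzero element of a lattice in `K'`. -/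
noncomputable def auxF (L : Submodule (𝓞 K') K') (y : K') : ℝ :=
  Real.log (Nat.card (↥L ⧸ comap L.subtype (span (𝓞 K') {y})))
    - ∑ σ : K' →+* ℂ, Real.log ‖σ y‖

theorem aux_F_smul (L : Submodule (𝓞 K') K') (hfg : L.FG) {y : K'} (hy : y ∈ L) (hy0 : y ≠ 0)
    {c : 𝓞 K'} (hc : c ≠ 0) :
    auxF L (algebraMap (𝓞 K') K' c * y) = auxF L y := by
  have hcK : algebraMap (𝓞 K') K' c ≠ 0 :=
    NumberField.RingOfIntegers.coe_ne_zero_iff.mpr hc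
  unfold auxF
  rw [aux_card_quot_smul L hy hy0 c]
  have hn0 : (Nat.card (↥L ⧸ comap L.subtype (span (𝓞 K') {y})) : ℝ) ≠ 0 := by
    exact_mod_cast aux_card_quot_ne_zero L hfg hy hy0
  have ha0 : ((Ideal.absNorm (Ideal.span {c}) : ℕ) : ℝ) ≠ 0 := by
    rw [aux_absNorm_cast]
    simp only [ne_eq, abs_eq_zero, Rat.cast_eq_zero]
    exact (Algebra.norm_ne_zero_iff (R := ℚ) (S := K')).mpr hcK
  have hcast : ((Nat.card (↥L ⧸ comap L.subtype (span (𝓞 K') {y}))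
      * Ideal.absNorm (Ideal.span {c}) : ℕ) : ℝ)
      = (Nat.card (↥L ⧸ comap L.subtype (span (𝓞 K') {y})) : ℝ)
        * ((Ideal.absNorm (Ideal.span {c}) : ℕ) : ℝ) := by push_cast; ring
  rw [hcast, Real.log_mul hn0 ha0]
  have hsum : ∑ σ : K' →+* ℂ, Real.log ‖σ (algebraMap (𝓞 K') K' c * y)‖
      = (∑ σ : K' →+* ℂ, Real.log ‖σ (algebraMap (𝓞 K') K' c)‖)
        + ∑ σ : K' →+* ℂ, Real.log ‖σ y‖ := by
    rw [← Finset.sum_add_distrib]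
    refine Finset.sum_congr rfl fun σ _ => ?_
    rw [map_mul, norm_mul, Real.log_mul]
    · simp only [ne_eq, norm_eq_zero, map_eq_zero]
      exact fun h => hcK (σ.injective (by simpa using h))
    · simp only [ne_eq, norm_eq_zero, map_eq_zero]
      exact fun h => hy0 (σ.injective (by simpa using h))
  rw [hsum, aux_prod_embeddings _ hcK, ← aux_absNorm_cast]
  ring

theorem aux_F_const (L : Submodule (𝓞 K') K') (hfg : L.FG) {y z : K'} (hy : y ∈ L) (hy0 : y ≠ 0)
    (hz : z ∈ L) (hz0 : z ≠ 0) : auxF L y = auxF L z := by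
  obtain ⟨a, b, hb, hab⟩ := IsFractionRing.div_surjective (A := 𝓞 K') (z / y)
  have hb0 : b ≠ 0 := nonZeroDivisors.ne_zero hb
  have hbne : algebraMap (𝓞 K') K' b ≠ 0 :=
    NumberField.RingOfIntegers.coe_ne_zero_iff.mpr hb0
  have hzy : z / y ≠ 0 := div_ne_zero hz0 hy0
  have ha0 : a ≠ 0 := by
    intro h
    subst h
    simp only [map_zero, zero_div] at hab
    exact hzy hab.symm
  have key : algebraMap (𝓞 K') K' a * y = algebraMap (𝓞 K') K' b * z := by
    have h1 := (div_eq_div_iff hbne hy0).mp hab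
    linear_combination h1
  calc auxF L y = auxF L (algebraMap (𝓞 K') K' a * y) := (aux_F_smul L hfg hy hy0 ha0).symm
    _ = auxF L (algebraMap (𝓞 K') K' b * z) := by rw [key]
    _ = auxF L z := aux_F_smul L hfg hz hz0 hb0

theorem aux_degLine_eq (L : Submodule (𝓞 K') K') (hfg : L.FG) {x : K'} (hx : x ∈ L)
    (hx0 : x ≠ 0) (g : (K' →+* ℂ) → ℝ) (hg : ∀ σ, 0 < g σ) :
    degLine K' L g =
      Real.log (Nat.card (↥L ⧸ comap L.subtype (span (𝓞 K') {x})))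
        - ∑ σ : K' →+* ℂ, Real.log (Real.sqrt (g σ * Complex.normSq (σ x))) := by
  have hex : ∃ t : K', t ∈ L ∧ t ≠ 0 := ⟨x, hx, hx0⟩
  have hdec : ∀ y : K', y ≠ 0 →
      (∑ σ : K' →+* ℂ, Real.log (Real.sqrt (g σ * Complex.normSq (σ y))))
        = (∑ σ : K' →+* ℂ, Real.log (Real.sqrt (g σ)))
          + ∑ σ : K' →+* ℂ, Real.log ‖σ y‖ := by
    intro y hy0
    rw [← Finset.sum_add_distrib]
    refine Finset.sum_congr rfl fun σ _ => ?_
    have hσy : σ y ≠ 0 := fun h => hy0 (σ.injective (by simpa using h))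
    have h1 : Real.sqrt (g σ * Complex.normSq (σ y))
        = Real.sqrt (g σ) * Real.sqrt (Complex.normSq (σ y)) :=
      Real.sqrt_mul (le_of_lt (hg σ)) _
    have h2 : Real.sqrt (Complex.normSq (σ y)) = ‖σ y‖ := (Complex.norm_def _).symm
    rw [h1, h2, Real.log_mul (ne_of_gt (Real.sqrt_pos.mpr (hg σ)))
      (fun h => hσy (norm_eq_zero.mp h))]
  unfold degLine
  rw [dif_pos hex]
  obtain ⟨hℓL, hℓ0⟩ := hex.choose_spec
  rw [finsum_eq_sum_of_fintype, hdec hex.choose hℓ0, hdec x hx0]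
  have hFF := aux_F_const L hfg hℓL hℓ0 hx hx0
  unfold auxF at hFF
  linarith [hFF]

theorem aux_card_le (L₁ L : Submodule (𝓞 K') K') (h₁ : L₁ ≤ L) (hfgL : L.FG)
    {x : K'} (hx₁ : x ∈ L₁) (hx0 : x ≠ 0) :
    Nat.card (↥L₁ ⧸ comap L₁.subtype (span (𝓞 K') {x}))
      ≤ Nat.card (↥L ⧸ comap L.subtype (span (𝓞 K') {x}))
    ∧ Nat.card (↥L₁ ⧸ comap L₁.subtype (span (𝓞 K') {x})) ≠ 0 := by
  set N₁ := comap L.subtype (span (𝓞 K') {x}) with hN₁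
  set N₂ := comap L.subtype L₁ with hN₂
  have hle : N₁ ≤ N₂ := by
    apply Submodule.comap_mono
    rw [Submodule.span_le, Set.singleton_subset_iff]
    exact hx₁
  let e : ↥N₂ ≃ₗ[𝓞 K'] ↥L₁ := Submodule.comapSubtypeEquivOfLe h₁
  have hmap : Submodule.map (e : ↥N₂ →ₗ[𝓞 K'] ↥L₁) (N₁.comap N₂.subtype)
      = comap L₁.subtype (span (𝓞 K') {x}) := by
    ext z
    constructor
    · rintro ⟨w, hw, rfl⟩
      exact hw
    · intro hz
      exact ⟨⟨⟨(z : K'), h₁ z.2⟩, z.2⟩, hz, Subtype.ext rfl⟩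
  have hequiv := Submodule.Quotient.equiv (M := ↥N₂) (N₁.comap N₂.subtype)
    (comap L₁.subtype (span (𝓞 K') {x})) e hmap
  have hcard := aux_card_quot_quot N₁ N₂ hle
  rw [Nat.card_congr hequiv.toEquiv] at hcard
  have hne : Nat.card (↥L ⧸ N₁) ≠ 0 := aux_card_quot_ne_zero L hfgL (h₁ hx₁) hx0
  constructor
  · rw [hcard]
    have hm : Nat.card (↥L ⧸ N₂) ≠ 0 := by
      intro h
      rw [hcard, h, zero_mul] at hne
      exact hne rfl
    exact Nat.le_mul_of_pos_left _ (Nat.pos_of_ne_zero hm)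
  · intro h
    rw [hcard, h, mul_zero] at hne
    exact hne rfl

theorem aux_degLine_mono (L₁ L : Submodule (𝓞 K') K') (h₁ : L₁ ≤ L) (hbot : L₁ ≠ ⊥)
    (hfgL : L.FG) (g g₁ : (K' →+* ℂ) → ℝ)
    (hgpos : ∀ σ, 0 < g σ) (hgle : ∀ σ, g σ ≤ g₁ σ) :
    degLine K' L₁ g₁ ≤ degLine K' L g := by
  obtain ⟨x, hxL₁, hx0⟩ := (Submodule.ne_bot_iff _).mp hbot
  have hxL : x ∈ L := h₁ hxL₁
  have hfin : Module.Finite (𝓞 K') ↥L := Module.Finite.iff_fg.mpr hfgL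
  have hnoeth : IsNoetherian (𝓞 K') ↥L := isNoetherian_of_isNoetherianRing_of_finite _ _
  have hfg₁ : L₁.FG := by
    have h' : (comap L.subtype L₁).FG := IsNoetherian.noetherian _
    have hmc : Submodule.map L.subtype (comap L.subtype L₁) = L₁ := by
      rw [Submodule.map_comap_subtype]
      exact inf_eq_right.mpr h₁
    exact hmc ▸ h'.map _
  have hg₁pos : ∀ σ, 0 < g₁ σ := fun σ => lt_of_lt_of_le (hgpos σ) (hgle σ)
  rw [aux_degLine_eq L hfgL hxL hx0 g hgpos, aux_degLine_eq L₁ hfg₁ hxL₁ hx0 g₁ hg₁pos]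
  obtain ⟨hle, hne₁⟩ := aux_card_le L₁ L h₁ hfgL hxL₁ hx0
  have hlog : Real.log (Nat.card (↥L₁ ⧸ comap L₁.subtype (span (𝓞 K') {x})))
      ≤ Real.log (Nat.card (↥L ⧸ comap L.subtype (span (𝓞 K') {x}))) := by
    apply Real.log_le_log
    · exact_mod_cast Nat.pos_of_ne_zero hne₁
    · exact_mod_cast hle
  have hsum : ∑ σ : K' →+* ℂ, Real.log (Real.sqrt (g σ * Complex.normSq (σ x)))
      ≤ ∑ σ : K' →+* ℂ, Real.log (Real.sqrt (g₁ σ * Complex.normSq (σ x))) := by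
    refine Finset.sum_le_sum fun σ _ => ?_
    have hσx : σ x ≠ 0 := fun h => hx0 (σ.injective (by simpa using h))
    apply Real.log_le_log
    · exact Real.sqrt_pos.mpr (mul_pos (hgpos σ) (Complex.normSq_pos.mpr hσx))
    · exact Real.sqrt_le_sqrt (mul_le_mul_of_nonneg_right (hgle σ) (Complex.normSq_nonneg _))
  linarith

section Analysis

variable {ι : Type} [Fintype ι]

theorem cForm_eq_dot (M : Matrix ι ι ℂ) (u v : ι → ℂ) :
    cForm M u v = dotProduct (star u) (M.mulVec v) := by
  unfold cForm
  rw [dotProduct]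
  refine Finset.sum_congr rfl fun i _ => ?_
  rw [Matrix.mulVec, dotProduct, Finset.mul_sum]
  refine Finset.sum_congr rfl fun j _ => ?_
  rw [Pi.star_apply, ← mul_assoc]
  rfl

theorem aux_cs {M : Matrix ι ι ℂ} (hM : M.PosDef) (w e : ι → ℂ) :
    Complex.normSq (dotProduct (star w) (M.mulVec e))
      ≤ (dotProduct (star w) (M.mulVec w)).re
        * (dotProduct (star e) (M.mulVec e)).re := by
  by_cases hw : w = 0
  · simp [hw, zero_dotProduct]
  set s : ℝ := (dotProduct (star w) (M.mulVec w)).re with hs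
  have hspos : 0 < s := hM.re_dotProduct_pos hw
  set z : ℂ := dotProduct (star w) (M.mulVec e) with hz
  set t : ℂ := z / (s : ℂ) with ht
  have hwwnn := hM.posSemidef.dotProduct_mulVec_nonneg w
  have hww : dotProduct (star w) (M.mulVec w) = (s : ℂ) := by
    rw [Complex.le_def] at hwwnn
    apply Complex.ext
    · simp [hs]
    · simp [← hwwnn.2]
  have hwe : dotProduct (star e) (M.mulVec w) = (starRingEnd ℂ) z := by
    rw [Matrix.star_dotProduct, Matrix.star_mulVec, hM.1, ← Matrix.dotProduct_mulVec]
    rfl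
  have key := hM.posSemidef.re_dotProduct_nonneg (e - t • w)
  have expand : dotProduct (star (e - t • w)) (M.mulVec (e - t • w))
      = dotProduct (star e) (M.mulVec e) - (starRingEnd ℂ) t * z
        - t * (starRingEnd ℂ) z + (starRingEnd ℂ) t * t * (s : ℂ) := by
    have h1 : star (e - t • w) = star e - (starRingEnd ℂ) t • star w := by
      rw [star_sub, star_smul]; rfl
    have h2 : M.mulVec (e - t • w) = M.mulVec e - t • M.mulVec w := by
      rw [Matrix.mulVec_sub, Matrix.mulVec_smul]
    rw [h1, h2, sub_dotProduct, dotProduct_sub, dotProduct_sub,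
      smul_dotProduct, smul_dotProduct, dotProduct_smul,
      dotProduct_smul]
    simp only [smul_eq_mul, ← hz]
    rw [hwe, hww]
    ring
  have hs0 : (s : ℂ) ≠ 0 := by exact_mod_cast hspos.ne'
  have hid : dotProduct (star (e - t • w)) (M.mulVec (e - t • w))
      = dotProduct (star e) (M.mulVec e) - ((Complex.normSq z / s : ℝ) : ℂ) := by
    rw [expand, ht, map_div₀, Complex.conj_ofReal, Complex.ofReal_div,
      Complex.normSq_eq_conj_mul_self]
    field_simp
    ring
  rw [hid] at key
  have key' : 0 ≤ (dotProduct (star e) (M.mulVec e)).re - Complex.normSq z / s := by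
    simpa [RCLike.re_to_complex, Complex.sub_re, Complex.ofReal_re] using key
  have : Complex.normSq z / s ≤ (dotProduct (star e) (M.mulVec e)).re := by linarith
  calc Complex.normSq z = Complex.normSq z / s * s := by field_simp
    _ ≤ (dotProduct (star e) (M.mulVec e)).re * s := by
        apply mul_le_mul_of_nonneg_right this (le_of_lt hspos)
    _ = s * (dotProduct (star e) (M.mulVec e)).re := by ring

theorem aux_quotMetric_pos {K' : Type} [Field K'] [DecidableEq ι]
    (H' : (K' →+* ℂ) → Matrix ι ι ℂ) (hpos : ∀ σ, (H' σ).PosDef)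
    (ψ : (ι → K') →ₗ[K'] K') (σ : K' →+* ℂ) (hψ : ∃ i, ψ (Pi.single i 1) ≠ 0) :
    0 < quotMetric H' ψ σ := by
  obtain ⟨i₀, hi₀⟩ := hψ
  set M := H' σ with hMdef
  set c : ι → ℂ := fun i => σ (ψ (Pi.single i 1)) with hc
  have hci₀ : c i₀ ≠ 0 := by
    intro h
    apply hi₀
    apply σ.injective
    rw [map_zero]
    exact h
  have hdet : IsUnit M.det := (Matrix.isUnit_iff_isUnit_det M).mp (hpos σ).isUnit
  set w : ι → ℂ := star (Matrix.vecMul c M⁻¹) with hw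
  have hwM : ∀ e : ι → ℂ, dotProduct (star w) (M.mulVec e) = dotProduct c e := by
    intro e
    rw [hw, star_star, Matrix.dotProduct_mulVec, Matrix.vecMul_vecMul,
      Matrix.nonsing_inv_mul M hdet, Matrix.vecMul_one]
  have hw0 : w ≠ 0 := by
    intro h
    have h1 : Matrix.vecMul c M⁻¹ = 0 := by
      have h2 := congrArg star h
      rwa [hw, star_star, star_zero] at h2
    have h2 := congrArg (fun v => Matrix.vecMul v M) h1
    simp only [Matrix.vecMul_vecMul, Matrix.nonsing_inv_mul M hdet, Matrix.vecMul_one,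
      Matrix.zero_vecMul] at h2
    exact hci₀ (congrFun h2 i₀)
  have hs : 0 < (dotProduct (star w) (M.mulVec w)).re := (hpos σ).re_dotProduct_pos hw0
  have hbpos : 0 < ((dotProduct (star w) (M.mulVec w)).re)⁻¹ := inv_pos.mpr hs
  refine lt_of_lt_of_le hbpos (le_csInf ?_ ?_)
  · refine ⟨(cForm M (Pi.single i₀ ((c i₀)⁻¹)) (Pi.single i₀ ((c i₀)⁻¹))).re,
      Pi.single i₀ ((c i₀)⁻¹), ?_, rfl⟩
    rw [Finset.sum_eq_single i₀]
    · rw [Pi.single_eq_same]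
      exact mul_inv_cancel₀ hci₀
    · intro j _ hj
      rw [Pi.single_eq_of_ne hj, mul_zero]
    · intro h
      exact absurd (Finset.mem_univ i₀) h
  · rintro t ⟨e, hcon, rfl⟩
    have h1 : dotProduct c e = 1 := hcon
    have hcs := aux_cs (hpos σ) w e
    rw [hwM e, h1] at hcs
    have h2 : Complex.normSq 1 = 1 := by simp
    rw [h2] at hcs
    rw [cForm_eq_dot, inv_eq_one_div, div_le_iff₀ hs]
    linarith

theorem cForm_fromBlocks {ι₁ ι₂ : Type} [Fintype ι₁] [Fintype ι₂]
    (M₁ : Matrix ι₁ ι₁ ℂ) (M₂ : Matrix ι₂ ι₂ ℂ) (u v : ι₁ ⊕ ι₂ → ℂ) :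
    cForm (Matrix.fromBlocks M₁ 0 0 M₂) u v
      = cForm M₁ (u ∘ Sum.inl) (v ∘ Sum.inl) + cForm M₂ (u ∘ Sum.inr) (v ∘ Sum.inr) := by
  unfold cForm
  rw [Fintype.sum_sum_type]
  simp only [Fintype.sum_sum_type, Matrix.fromBlocks_apply₁₁, Matrix.fromBlocks_apply₁₂,
    Matrix.fromBlocks_apply₂₁, Matrix.fromBlocks_apply₂₂, Matrix.zero_apply, mul_zero, zero_mul,
    Finset.sum_const_zero, add_zero, zero_add, Function.comp_apply]

theorem posDef_fromBlocks {ι₁ ι₂ : Type} [Fintype ι₁] [Fintype ι₂]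
    {M₁ : Matrix ι₁ ι₁ ℂ} {M₂ : Matrix ι₂ ι₂ ℂ} (h₁ : M₁.PosDef) (h₂ : M₂.PosDef) :
    (Matrix.fromBlocks M₁ 0 0 M₂).PosDef := by
  rw [Matrix.posDef_iff_dotProduct_mulVec]
  constructor
  · show (Matrix.fromBlocks M₁ 0 0 M₂).conjTranspose = Matrix.fromBlocks M₁ 0 0 M₂
    rw [Matrix.fromBlocks_conjTranspose, h₁.1, h₂.1]
    simp only [Matrix.conjTranspose_zero]
  · intro x hx
    have hsplit : dotProduct (star x) ((Matrix.fromBlocks M₁ 0 0 M₂).mulVec x)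
        = dotProduct (star (x ∘ Sum.inl)) (M₁.mulVec (x ∘ Sum.inl))
          + dotProduct (star (x ∘ Sum.inr)) (M₂.mulVec (x ∘ Sum.inr)) := by
      rw [← cForm_eq_dot, ← cForm_eq_dot, ← cForm_eq_dot, cForm_fromBlocks]
    rw [hsplit]
    by_cases h : (x ∘ Sum.inl) = 0
    · have h2 : x ∘ Sum.inr ≠ 0 := by
        intro h2
        apply hx
        funext i
        cases i with
        | inl a => exact congrFun h a
        | inr b => exact congrFun h2 b
      exact add_pos_of_nonneg_of_pos (h₁.posSemidef.dotProduct_mulVec_nonneg (x ∘ Sum.inl)) (h₂.dotProduct_mulVec_pos h2)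
    · exact add_pos_of_pos_of_nonneg (h₁.dotProduct_mulVec_pos h) (h₂.posSemidef.dotProduct_mulVec_nonneg (x ∘ Sum.inr))

theorem aux_quotMetric_le_left {K' : Type} [Field K'] {ι₁ ι₂ : Type} [Fintype ι₁] [Fintype ι₂]
    [DecidableEq ι₁] [DecidableEq ι₂]
    (Ha : (K' →+* ℂ) → Matrix ι₁ ι₁ ℂ) (Hb : (K' →+* ℂ) → Matrix ι₂ ι₂ ℂ)
    (hpa : ∀ σ, (Ha σ).PosDef) (hpb : ∀ σ, (Hb σ).PosDef)
    (ψ : (ι₁ ⊕ ι₂ → K') →ₗ[K'] K') (J : (ι₁ → K') →ₗ[K'] (ι₁ ⊕ ι₂ → K'))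
    (hJ : ∀ v, J v = Sum.elim v (0 : ι₂ → K'))
    (σ : K' →+* ℂ)
    (hne : ∃ i, (ψ.comp J) (Pi.single i 1) ≠ 0) :
    quotMetric (fun τ => Matrix.fromBlocks (Ha τ) 0 0 (Hb τ)) ψ σ
      ≤ quotMetric Ha (ψ.comp J) σ := by
  have hinl : ∀ a : ι₁, ψ (Pi.single (Sum.inl a) (1 : K')) = (ψ.comp J) (Pi.single a 1) := by
    intro a
    rw [LinearMap.comp_apply]
    congr 1
    rw [hJ]
    funext i
    cases i with
    | inl b => simp [Pi.single_apply, Sum.inl.injEq]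
    | inr b => simp [Pi.single_apply]
  apply csInf_le_csInf
  · refine ⟨0, ?_⟩
    rintro t ⟨e, _, rfl⟩
    rw [cForm_eq_dot]
    exact (posDef_fromBlocks (hpa σ) (hpb σ)).posSemidef.re_dotProduct_nonneg e
  · obtain ⟨i₀, hi₀⟩ := hne
    have hci₀ : σ ((ψ.comp J) (Pi.single i₀ 1)) ≠ 0 := fun h => hi₀ (σ.injective (by simpa using h))
    refine ⟨_, Pi.single i₀ ((σ ((ψ.comp J) (Pi.single i₀ 1)))⁻¹), ?_, rfl⟩
    rw [Finset.sum_eq_single i₀]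
    · rw [Pi.single_eq_same]
      exact mul_inv_cancel₀ hci₀
    · intro j _ hj
      rw [Pi.single_eq_of_ne hj, mul_zero]
    · intro h
      exact absurd (Finset.mem_univ i₀) h
  · rintro t ⟨e₁, hcon, rfl⟩
    refine ⟨Sum.elim e₁ (0 : ι₂ → ℂ), ?_, ?_⟩
    · rw [Fintype.sum_sum_type]
      have h1 : (∑ a : ι₁, σ (ψ (Pi.single (Sum.inl a) 1)) * Sum.elim e₁ (0 : ι₂ → ℂ) (Sum.inl a))
          = ∑ a : ι₁, σ ((ψ.comp J) (Pi.single a 1)) * e₁ a := by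
        refine Finset.sum_congr rfl fun a _ => ?_
        rw [hinl a]
        rfl
      have h2 : (∑ b : ι₂, σ (ψ (Pi.single (Sum.inr b) 1)) * Sum.elim e₁ (0 : ι₂ → ℂ) (Sum.inr b))
          = 0 := by
        refine Finset.sum_eq_zero fun b _ => ?_
        show σ (ψ (Pi.single (Sum.inr b) 1)) * 0 = 0
        rw [mul_zero]
      rw [h1, h2, add_zero, hcon]
    · rw [cForm_fromBlocks]
      have h1 : (Sum.elim e₁ (0 : ι₂ → ℂ)) ∘ Sum.inl = e₁ := rfl
      have h2 : (Sum.elim e₁ (0 : ι₂ → ℂ)) ∘ Sum.inr = (0 : ι₂ → ℂ) := rfl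
      rw [h1, h2]
      have h3 : cForm (Hb σ) (0 : ι₂ → ℂ) (0 : ι₂ → ℂ) = 0 := by
        simp [cForm]
      rw [h3, add_zero]

theorem aux_quotMetric_le_right {K' : Type} [Field K'] {ι₁ ι₂ : Type} [Fintype ι₁] [Fintype ι₂]
    [DecidableEq ι₁] [DecidableEq ι₂]
    (Ha : (K' →+* ℂ) → Matrix ι₁ ι₁ ℂ) (Hb : (K' →+* ℂ) → Matrix ι₂ ι₂ ℂ)
    (hpa : ∀ σ, (Ha σ).PosDef) (hpb : ∀ σ, (Hb σ).PosDef)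
    (ψ : (ι₁ ⊕ ι₂ → K') →ₗ[K'] K') (J : (ι₂ → K') →ₗ[K'] (ι₁ ⊕ ι₂ → K'))
    (hJ : ∀ v, J v = Sum.elim (0 : ι₁ → K') v)
    (σ : K' →+* ℂ)
    (hne : ∃ i, (ψ.comp J) (Pi.single i 1) ≠ 0) :
    quotMetric (fun τ => Matrix.fromBlocks (Ha τ) 0 0 (Hb τ)) ψ σ
      ≤ quotMetric Hb (ψ.comp J) σ := by
  have hinr : ∀ a : ι₂, ψ (Pi.single (Sum.inr a) (1 : K')) = (ψ.comp J) (Pi.single a 1) := by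
    intro a
    rw [LinearMap.comp_apply]
    congr 1
    rw [hJ]
    funext i
    cases i with
    | inl b => simp [Pi.single_apply]
    | inr b => simp [Pi.single_apply, Sum.inr.injEq]
  apply csInf_le_csInf
  · refine ⟨0, ?_⟩
    rintro t ⟨e, _, rfl⟩
    rw [cForm_eq_dot]
    exact (posDef_fromBlocks (hpa σ) (hpb σ)).posSemidef.re_dotProduct_nonneg e
  · obtain ⟨i₀, hi₀⟩ := hne
    have hci₀ : σ ((ψ.comp J) (Pi.single i₀ 1)) ≠ 0 := fun h => hi₀ (σ.injective (by simpa using h))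
    refine ⟨_, Pi.single i₀ ((σ ((ψ.comp J) (Pi.single i₀ 1)))⁻¹), ?_, rfl⟩
    rw [Finset.sum_eq_single i₀]
    · rw [Pi.single_eq_same]
      exact mul_inv_cancel₀ hci₀
    · intro j _ hj
      rw [Pi.single_eq_of_ne hj, mul_zero]
    · intro h
      exact absurd (Finset.mem_univ i₀) h
  · rintro t ⟨e₂, hcon, rfl⟩
    refine ⟨Sum.elim (0 : ι₁ → ℂ) e₂, ?_, ?_⟩
    · rw [Fintype.sum_sum_type]
      have h1 : (∑ a : ι₁, σ (ψ (Pi.single (Sum.inl a) 1)) * Sum.elim (0 : ι₁ → ℂ) e₂ (Sum.inl a))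
          = 0 := by
        refine Finset.sum_eq_zero fun b _ => ?_
        show σ (ψ (Pi.single (Sum.inl b) 1)) * 0 = 0
        rw [mul_zero]
      have h2 : (∑ b : ι₂, σ (ψ (Pi.single (Sum.inr b) 1)) * Sum.elim (0 : ι₁ → ℂ) e₂ (Sum.inr b))
          = ∑ b : ι₂, σ ((ψ.comp J) (Pi.single b 1)) * e₂ b := by
        refine Finset.sum_congr rfl fun a _ => ?_
        rw [hinr a]
        rfl
      rw [h1, h2, zero_add, hcon]
    · rw [cForm_fromBlocks]
      have h1 : (Sum.elim (0 : ι₁ → ℂ) e₂) ∘ Sum.inl = (0 : ι₁ → ℂ) := rfl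
      have h2 : (Sum.elim (0 : ι₁ → ℂ) e₂) ∘ Sum.inr = e₂ := rfl
      rw [h1, h2]
      have h3 : cForm (Ha σ) (0 : ι₁ → ℂ) (0 : ι₁ → ℂ) = 0 := by
        simp [cForm]
      rw [h3, zero_add]

end Analysis

section Glue

theorem aux_exists_single_ne {K' : Type} [Field K'] [NumberField K'] {ι : Type} [Fintype ι]
    [DecidableEq ι] (ψ : (ι → K') →ₗ[K'] K') (N : Submodule (𝓞 K') (ι → K'))
    (h : Submodule.map (ψ.restrictScalars (𝓞 K')) N ≠ ⊥) :
    ∃ i, ψ (Pi.single i 1) ≠ 0 := by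
  obtain ⟨y, hyL, hy0⟩ := (Submodule.ne_bot_iff _).mp h
  obtain ⟨v, hv, rfl⟩ := hyL
  by_contra hall
  push_neg at hall
  apply hy0
  show ψ v = 0
  have hv2 : v = ∑ i : ι, v i • (Pi.single i (1 : K') : ι → K') := by
    funext j
    rw [Finset.sum_apply]
    simp [Pi.single_apply]
  rw [hv2, map_sum]
  simp [hall]

variable {K : Type} [Field K] [NumberField K] {K' : Type} [Field K'] [NumberField K']
  [Algebra K K']

theorem aux_bc_fg {ι : Type} [Fintype ι] (E : Submodule (𝓞 K) (ι → K)) (hfg : E.FG) :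
    (baseChange K K' E).FG := by
  classical
  obtain ⟨T, hT⟩ := hfg
  refine ⟨T.image (fun v i => algebraMap K K' (v i)), ?_⟩
  unfold _root_.baseChange
  set f : (ι → K) → (ι → K') := fun v i => algebraMap K K' (v i) with hf
  apply le_antisymm
  · rw [Submodule.span_le]
    rintro x hx
    rw [Finset.coe_image] at hx
    obtain ⟨v, hvT, rfl⟩ := hx
    exact Submodule.subset_span ⟨v, hT ▸ Submodule.subset_span hvT, rfl⟩
  · rw [Submodule.span_le]
    rintro _ ⟨v, hv, rfl⟩
    rw [← hT] at hv
    induction hv using Submodule.span_induction with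
    | mem t ht =>
        apply Submodule.subset_span
        rw [Finset.coe_image]
        exact Set.mem_image_of_mem _ ht
    | zero =>
        have h0 : f 0 = 0 := by funext i; simp [hf]
        rw [h0]; exact Submodule.zero_mem _
    | add y z _ _ hy' hz' =>
        have hadd : f (y + z) = f y + f z := by funext i; simp [hf]
        rw [hadd]; exact Submodule.add_mem _ hy' hz'
    | smul r y _ hy' =>
        have hsmul : f (r • y) = (algebraMap (𝓞 K) (𝓞 K') r) • f y := by
          funext i
          rw [hf]
          show algebraMap K K' ((r • y) i) = ((algebraMap (𝓞 K) (𝓞 K') r) • f y) i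
          rw [Pi.smul_apply, Pi.smul_apply, Algebra.smul_def, Algebra.smul_def, map_mul,
            ← IsScalarTower.algebraMap_apply, ← IsScalarTower.algebraMap_apply]
        rw [hsmul]
        exact Submodule.smul_mem _ _ hy'

end Glue

end Aux

/-- Let `K` be a number field.  The orthogonal direct sum of two nef
hermitian `𝒪_K`-lattices is nef.  Here the orthogonal sum of the lattices `E₁ ⊆ K^ι₁` and
`E₂ ⊆ K^ι₂` is the lattice `E₁ ⊕ E₂ ⊆ K^(ι₁ ⊕ ι₂)`, with the block-diagonal
(orthogonal direct sum) metrics. -/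
theorem isNef_orthogonal_sum (K : Type) [Field K] [NumberField K]
    {ι₁ ι₂ : Type} [Fintype ι₁] [Fintype ι₂] [DecidableEq ι₁] [DecidableEq ι₂]
    (E₁ : Submodule (𝓞 K) (ι₁ → K)) (E₂ : Submodule (𝓞 K) (ι₂ → K))
    (hfg₁ : E₁.FG) (hfg₂ : E₂.FG)
    (hfull₁ : Submodule.span K ((E₁ : Set (ι₁ → K))) = ⊤)
    (hfull₂ : Submodule.span K ((E₂ : Set (ι₂ → K))) = ⊤)
    (H₁ : (K →+* ℂ) → Matrix ι₁ ι₁ ℂ) (H₂ : (K →+* ℂ) → Matrix ι₂ ι₂ ℂ)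
    (hpos₁ : ∀ σ, (H₁ σ).PosDef) (hpos₂ : ∀ σ, (H₂ σ).PosDef)
    (hconj₁ : ConjCompatible K H₁) (hconj₂ : ConjCompatible K H₂)
    (hnef₁ : IsNef K H₁ E₁) (hnef₂ : IsNef K H₂ E₂) :
    IsNef K (fun σ => Matrix.fromBlocks (H₁ σ) 0 0 (H₂ σ))
      ((E₁.comap (LinearMap.funLeft (𝓞 K) K Sum.inl)) ⊓
        (E₂.comap (LinearMap.funLeft (𝓞 K) K Sum.inr))) := by
  intro K' _ _ _ ψ hne
  classical
  let J₁ : (ι₁ → K') →ₗ[K'] (ι₁ ⊕ ι₂ → K') :=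
    { toFun := fun v => Sum.elim v 0
      map_add' := fun v w => by funext i; cases i <;> simp
      map_smul' := fun r v => by funext i; cases i <;> simp }
  let J₂ : (ι₂ → K') →ₗ[K'] (ι₁ ⊕ ι₂ → K') :=
    { toFun := fun v => Sum.elim 0 v
      map_add' := fun v w => by funext i; cases i <;> simp
      map_smul' := fun r v => by funext i; cases i <;> simp }
  have hJ₁ : ∀ v, J₁ v = Sum.elim v (0 : ι₂ → K') := fun v => rfl
  have hJ₂ : ∀ v, J₂ v = Sum.elim (0 : ι₁ → K') v := fun v => rfl
  set E := (E₁.comap (LinearMap.funLeft (𝓞 K) K Sum.inl)) ⊓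
    (E₂.comap (LinearMap.funLeft (𝓞 K) K Sum.inr)) with hE
  set ψ₁ := ψ.comp J₁ with hψ₁
  set ψ₂ := ψ.comp J₂ with hψ₂
  set L := Submodule.map (ψ.restrictScalars (𝓞 K')) (baseChange K K' E) with hL
  set L₁ := Submodule.map (ψ₁.restrictScalars (𝓞 K')) (baseChange K K' E₁) with hL₁
  set L₂ := Submodule.map (ψ₂.restrictScalars (𝓞 K')) (baseChange K K' E₂) with hL₂
  have hEfg : E.FG := by
    have hEeq : E = Submodule.map
        (((LinearEquiv.sumArrowLequivProdArrow ι₁ ι₂ (𝓞 K) K).symm :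
          ((ι₁ → K) × (ι₂ → K)) ≃ₗ[𝓞 K] (ι₁ ⊕ ι₂ → K)) :
            ((ι₁ → K) × (ι₂ → K)) →ₗ[𝓞 K] (ι₁ ⊕ ι₂ → K)) (E₁.prod E₂) := by
      ext x
      rw [hE]
      simp only [Submodule.mem_inf, Submodule.mem_comap, Submodule.mem_map,
        Submodule.mem_prod]
      constructor
      · rintro ⟨h1, h2⟩
        refine ⟨(fun a => x (Sum.inl a), fun b => x (Sum.inr b)), ⟨h1, h2⟩, ?_⟩
        funext i
        cases i <;> rfl
      · rintro ⟨⟨v, w⟩, ⟨hv, hw⟩, rfl⟩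
        exact ⟨hv, hw⟩
    rw [hEeq]
    exact (hfg₁.prod hfg₂).map _
  have hLfg : L.FG := (aux_bc_fg E hEfg).map _
  have hJ₁mem : ∀ u ∈ baseChange K K' E₁, J₁ u ∈ baseChange K K' E := by
    intro u hu
    unfold _root_.baseChange at hu
    induction hu using Submodule.span_induction with
    | mem x hx =>
        obtain ⟨w, hwE, rfl⟩ := hx
        have hw' : Sum.elim w (0 : ι₂ → K) ∈ E := by
          rw [hE, Submodule.mem_inf]
          constructor
        --
          · exact hwE
          · exact E₂.zero_mem
        apply Submodule.subset_span
        refine ⟨Sum.elim w (0 : ι₂ → K), hw', ?_⟩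
        funext i
        cases i with
        | inl a => rfl
        | inr b => exact map_zero (algebraMap K K')
    | zero => rw [map_zero]; exact Submodule.zero_mem _
    | add x y _ _ hx' hy' => rw [map_add]; exact Submodule.add_mem _ hx' hy'
    | smul r x _ hx' =>
        rw [show J₁ (r • x) = r • J₁ x from (J₁.restrictScalars (𝓞 K')).map_smul r x]
        exact Submodule.smul_mem _ _ hx'
  have hJ₂mem : ∀ u ∈ baseChange K K' E₂, J₂ u ∈ baseChange K K' E := by
    intro u hu
    unfold _root_.baseChange at hu
    induction hu using Submodule.span_induction with
    | mem x hx =>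
        obtain ⟨w, hwE, rfl⟩ := hx
        have hw' : Sum.elim (0 : ι₁ → K) w ∈ E := by
          rw [hE, Submodule.mem_inf]
          constructor
        --
          · exact E₁.zero_mem
          · exact hwE
        apply Submodule.subset_span
        refine ⟨Sum.elim (0 : ι₁ → K) w, hw', ?_⟩
        funext i
        cases i with
        | inl a => exact map_zero (algebraMap K K')
        | inr b => rfl
    | zero => rw [map_zero]; exact Submodule.zero_mem _
    | add x y _ _ hx' hy' => rw [map_add]; exact Submodule.add_mem _ hx' hy'
    | smul r x _ hx' =>
        rw [show J₂ (r • x) = r • J₂ x from (J₂.restrictScalars (𝓞 K')).map_smul r x]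
        exact Submodule.smul_mem _ _ hx'
  have hL₁le : L₁ ≤ L := by
    rintro y ⟨u, hu, rfl⟩
    exact ⟨J₁ u, hJ₁mem u hu, rfl⟩
  have hL₂le : L₂ ≤ L := by
    rintro y ⟨u, hu, rfl⟩
    exact ⟨J₂ u, hJ₂mem u hu, rfl⟩
  have hψne : ∃ i, ψ (Pi.single i 1) ≠ 0 :=
    aux_exists_single_ne ψ (baseChange K K' E) (by rw [← hL]; exact hne)
  have hLle : L ≤ L₁ ⊔ L₂ := by
    rintro y ⟨v, hv, rfl⟩
    have hv' : v ∈ Submodule.span (𝓞 K')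
        ((fun w i => algebraMap K K' (w i)) '' (E : Set (ι₁ ⊕ ι₂ → K))) := hv
    clear hv
    induction hv' using Submodule.span_induction with
    | mem x hx =>
        obtain ⟨w, hwE, rfl⟩ := hx
        obtain ⟨hw1, hw2⟩ := Submodule.mem_inf.mp (hE ▸ hwE)
        have hsplit : ((fun (w : ι₁ ⊕ ι₂ → K) (i : ι₁ ⊕ ι₂) => algebraMap K K' (w i)) w)
            = J₁ (fun a => algebraMap K K' (w (Sum.inl a)))
              + J₂ (fun b => algebraMap K K' (w (Sum.inr b))) := by
          funext i
          cases i with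
          | inl a =>
              show algebraMap K K' (w (Sum.inl a)) = algebraMap K K' (w (Sum.inl a)) + 0
              rw [add_zero]
          | inr b =>
              show algebraMap K K' (w (Sum.inr b)) = 0 + algebraMap K K' (w (Sum.inr b))
              rw [zero_add]
        show (ψ.restrictScalars (𝓞 K'))
            ((fun (w : ι₁ ⊕ ι₂ → K) (i : ι₁ ⊕ ι₂) => algebraMap K K' (w i)) w) ∈ L₁ ⊔ L₂
        rw [hsplit, map_add]
        refine Submodule.add_mem _ (Submodule.mem_sup_left ?_) (Submodule.mem_sup_right ?_)
        · exact ⟨fun a => algebraMap K K' (w (Sum.inl a)),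
            Submodule.subset_span ⟨fun a => w (Sum.inl a), hw1, rfl⟩, rfl⟩
        · exact ⟨fun b => algebraMap K K' (w (Sum.inr b)),
            Submodule.subset_span ⟨fun b => w (Sum.inr b), hw2, rfl⟩, rfl⟩
    | zero => rw [map_zero]; exact Submodule.zero_mem _
    | add x y _ _ hx' hy' => rw [map_add]; exact Submodule.add_mem _ hx' hy'
    | smul r x _ hx' =>
        rw [(ψ.restrictScalars (𝓞 K')).map_smul]
        exact Submodule.smul_mem _ _ hx'
  have hcases : L₁ ≠ ⊥ ∨ L₂ ≠ ⊥ := by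
    by_contra hcon
    push_neg at hcon
    obtain ⟨hb₁, hb₂⟩ := hcon
    apply hne
    apply le_bot_iff.mp
    calc L ≤ L₁ ⊔ L₂ := hLle
      _ = ⊥ := by rw [hb₁, hb₂, sup_idem]
  have hposSum : ∀ σ' : K' →+* ℂ,
      ((baseChangeMetric K K' (fun σ => Matrix.fromBlocks (H₁ σ) 0 0 (H₂ σ))) σ').PosDef :=
    fun σ' => posDef_fromBlocks (hpos₁ _) (hpos₂ _)
  have hgpos : ∀ σ', 0 < quotMetric
      (baseChangeMetric K K' (fun σ => Matrix.fromBlocks (H₁ σ) 0 0 (H₂ σ))) ψ σ' :=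
    fun σ' => aux_quotMetric_pos _ hposSum ψ σ' hψne
  cases hcases with
  | inl hb =>
      have hψ₁ne : ∃ i, ψ₁ (Pi.single i 1) ≠ 0 :=
        aux_exists_single_ne ψ₁ (baseChange K K' E₁) (by rw [← hL₁]; exact hb)
      have h0 : 0 ≤ degLine K' L₁ (quotMetric (baseChangeMetric K K' H₁) ψ₁) :=
        hnef₁ K' ψ₁ (by rw [← hL₁]; exact hb)
      refine le_trans h0 (aux_degLine_mono L₁ L hL₁le hb hLfg _ _ hgpos ?_)
      intro σ'
      exact aux_quotMetric_le_left (baseChangeMetric K K' H₁) (baseChangeMetric K K' H₂)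
        (fun τ => hpos₁ _) (fun τ => hpos₂ _) ψ J₁ hJ₁ σ' hψ₁ne
  | inr hb =>
      have hψ₂ne : ∃ i, ψ₂ (Pi.single i 1) ≠ 0 :=
        aux_exists_single_ne ψ₂ (baseChange K K' E₂) (by rw [← hL₂]; exact hb)
      have h0 : 0 ≤ degLine K' L₂ (quotMetric (baseChangeMetric K K' H₂) ψ₂) :=
        hnef₂ K' ψ₂ (by rw [← hL₂]; exact hb)
      refine le_trans h0 (aux_degLine_mono L₂ L hL₂le hb hLfg _ _ hgpos ?_)
      intro σ'
      exact aux_quotMetric_le_right (baseChangeMetric K K' H₁) (baseChangeMetric K K' H₂)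
        (fun τ => hpos₁ _) (fun τ => hpos₂ _) ψ J₂ hJ₂ σ' hψ₂ne
end

section
/- Under the axioms below, for any nonzero objects M₁, M₂ of C one has ν(M₁ ⊗ M₂) ≤ μ_max(M₁) + μ_max(M₂). -/
open CategoryTheory CategoryTheory.Limits MonoidalCategory

noncomputable section

universe v u

variable {C : Type u} [Category.{v} C]

/-- The coimage of a morphism in a category with kernels and cokernels:
the cokernel of its kernel. -/
def Coim [HasZeroMorphisms C] [HasKernels C] [HasCokernels C] {X Y : C} (f : X ⟶ Y) : C :=
  cokernel (kernel.ι f)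

/-- The image of a morphism in a category with kernels and cokernels:
the kernel of its cokernel. -/
def Im [HasZeroMorphisms C] [HasKernels C] [HasCokernels C] {X Y : C} (f : X ⟶ Y) : C :=
  kernel (cokernel.π f)

/-- `μ_max(M) ∈ ℝ ∪ {±∞}`: the supremum of `μ(N)` over the nonzero subobjects `N` of `M`
(taken in the extended reals; it is `> -∞` as soon as `M` is nonzero, and it may be `+∞`). -/
def muMaxE (μ : C → ℝ) (M : C) : EReal :=
  sSup { x : EReal | ∃ (N : C) (f : N ⟶ M), Mono f ∧ ¬ IsZero N ∧ x = (μ N : EReal) }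

/-- An object `L` of a monoidal category is invertible if it admits a two-sided
`⊗`-inverse. -/
def IsInvertibleObj [MonoidalCategory C] (L : C) : Prop :=
  ∃ L' : C, Nonempty (L ⊗ L' ≅ 𝟙_ C) ∧ Nonempty (L' ⊗ L ≅ 𝟙_ C)

/-- `ν(M) ∈ ℝ ∪ {±∞}`: the supremum of `μ(L)` over the nonzero invertible subobjects `L`
of `M` (it is `-∞` if there is no such subobject). -/
def nuE [MonoidalCategory C] (μ : C → ℝ) (M : C) : EReal :=
  sSup { x : EReal | ∃ (L : C) (f : L ⟶ M), Mono f ∧ ¬ IsZero L ∧ IsInvertibleObj L ∧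
    x = (μ L : EReal) }

end

open CategoryTheory CategoryTheory.Limits MonoidalCategory

/-! ### Auxiliary lemmas -/

section Aux

variable {C : Type u} [Category.{v} C]

section Monoidal

variable [MonoidalCategory C]

/-- The canonical isomorphism `A ⊗ (B ⊗ V) ≅ V` coming from an isomorphism `γ : A ⊗ B ≅ 𝟙`. -/
def sandIso (A B : C) (γ : A ⊗ B ≅ 𝟙_ C) (V : C) : A ⊗ (B ⊗ V) ≅ V :=
  (α_ A B V).symm ≪≫ whiskerRightIso γ V ≪≫ λ_ V

lemma sand_natural {A B : C} (γ : A ⊗ B ≅ 𝟙_ C) {V W : C} (x : V ⟶ W) :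
    (A ◁ (B ◁ x)) ≫ (sandIso A B γ W).hom = (sandIso A B γ V).hom ≫ x := by
  simp only [sandIso, Iso.trans_hom, Iso.symm_hom, whiskerRightIso_hom, Category.assoc]
  rw [associator_inv_naturality_right_assoc, whisker_exchange_assoc,
    leftUnitor_naturality]

lemma sand_conj {A B : C} (γ : A ⊗ B ≅ 𝟙_ C) {V W : C} (x : V ⟶ W) :
    x = (sandIso A B γ V).inv ≫ (A ◁ (B ◁ x)) ≫ (sandIso A B γ W).hom := by
  rw [sand_natural γ x, Iso.inv_hom_id_assoc]

/-- Whiskering by `B` is injective when `B` admits a left inverse. -/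
lemma whiskerLeft_injective {A B : C} (γ : A ⊗ B ≅ 𝟙_ C) {V W : C} {x y : V ⟶ W}
    (h : B ◁ x = B ◁ y) : x = y := by
  rw [sand_conj γ x, sand_conj γ y, h]

/-- Tensoring an invertible object with a zero object gives a zero object. -/
lemma isZero_tensor_left [HasZeroMorphisms C] {L L' : C} (γ : L ⊗ L' ≅ 𝟙_ C)
    (δ : L' ⊗ L ≅ 𝟙_ C) {Z : C} (hZ : IsZero Z) : IsZero (L ⊗ Z) := by
  rw [IsZero.iff_id_eq_zero]
  apply whiskerLeft_injective γ (x := 𝟙 (L ⊗ Z)) (y := 0)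
  have h := hZ.eq_of_src
    ((sandIso L' L δ Z).inv ≫ (L' ◁ (𝟙 (L ⊗ Z))) ≫ (sandIso L' L δ Z).hom)
    ((sandIso L' L δ Z).inv ≫ (L' ◁ (0 : L ⊗ Z ⟶ L ⊗ Z)) ≫ (sandIso L' L δ Z).hom)
  have h2 := (cancel_epi (sandIso L' L δ Z).inv).mp h
  exact (cancel_mono (sandIso L' L δ Z).hom).mp h2

/-- Whiskering a nonzero morphism by (the inverse of) an invertible object is nonzero. -/
lemma whiskerLeft_ne_zero [HasZeroMorphisms C] [HasZeroObject C]
    {L L' : C} (γ : L ⊗ L' ≅ 𝟙_ C) (δ : L' ⊗ L ≅ 𝟙_ C) {V W : C} (f : V ⟶ W)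
    (hf : f ≠ 0) : L' ◁ f ≠ 0 := by
  intro h
  apply hf
  obtain ⟨Z, hZ⟩ := HasZeroObject.zero (C := C)
  have hfac : (0 : L' ⊗ V ⟶ L' ⊗ W) = (0 : L' ⊗ V ⟶ Z) ≫ (0 : Z ⟶ L' ⊗ W) := by simp
  have hzz : L ◁ (0 : Z ⟶ L' ⊗ W) = 0 :=
    (isZero_tensor_left γ δ hZ).eq_of_src _ _
  have : L ◁ (L' ◁ f) = 0 := by
    rw [h, hfac, MonoidalCategory.whiskerLeft_comp, hzz, comp_zero]
  rw [sand_conj γ f, this, zero_comp, comp_zero]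

/-- Whiskering by an invertible object preserves monomorphisms. -/
lemma mono_whiskerLeft {L L' : C} (γ : L ⊗ L' ≅ 𝟙_ C) (δ : L' ⊗ L ≅ 𝟙_ C)
    {X Y : C} (m : X ⟶ Y) [Mono m] : Mono (L ◁ m) := by
  constructor
  intro T a b h
  have h2 : (L' ◁ a) ≫ (L' ◁ (L ◁ m)) = (L' ◁ b) ≫ (L' ◁ (L ◁ m)) := by
    rw [← MonoidalCategory.whiskerLeft_comp, ← MonoidalCategory.whiskerLeft_comp, h]
  have key : L' ◁ (L ◁ m) = (sandIso L' L δ X).hom ≫ m ≫ (sandIso L' L δ Y).inv := by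
    rw [← cancel_mono (sandIso L' L δ Y).hom, sand_natural δ m]
    simp
  rw [key] at h2
  simp only [← Category.assoc] at h2
  have h3 := (cancel_mono (sandIso L' L δ Y).inv).mp h2
  have h4 := (cancel_mono m).mp h3
  have h5 := (cancel_mono (sandIso L' L δ X).hom).mp h4
  exact whiskerLeft_injective γ h5

end Monoidal

section Functors

variable {D : Type u₂} [Category.{v₂} D] [HasZeroMorphisms C] [HasZeroMorphisms D]

lemma CategoryTheory.Functor.map_zero_of_full (F : C ⥤ D) [F.Full] {Z : C} (hZ : IsZero Z) (A B : C) :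
    F.map (0 : A ⟶ B) = 0 := by
  have h : (0 : A ⟶ B) = (0 : A ⟶ Z) ≫ (0 : Z ⟶ B) := by simp
  rw [h, F.map_comp]
  have h2 : F.map (0 : Z ⟶ B) = 0 := by
    obtain ⟨w, hw⟩ := F.map_surjective (0 : F.obj Z ⟶ F.obj B)
    rw [show (0 : Z ⟶ B) = w from hZ.eq_of_src _ _, hw]
  rw [h2, comp_zero]

lemma CategoryTheory.Functor.isZero_obj_of_full (F : C ⥤ D) [F.Full] {Z : C} (hZ : IsZero Z) :
    IsZero (F.obj Z) := by
  rw [IsZero.iff_id_eq_zero, ← F.map_id,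
    show (𝟙 Z) = (0 : Z ⟶ Z) from hZ.eq_of_src _ _]
  exact F.map_zero_of_full hZ Z Z

lemma CategoryTheory.Functor.map_ne_zero (F : C ⥤ D) [F.Full] [F.Faithful] {Z : C} (hZ : IsZero Z)
    {A B : C} (f : A ⟶ B) (hf : f ≠ 0) : F.map f ≠ 0 := by
  intro h
  exact hf (F.map_injective (by rw [h, F.map_zero_of_full hZ]))

end Functors

end Aux

/-- Let `C` be an (essentially small) monoidal category with a zero object,
kernels and cokernels, `μ` a real-valued function on its nonzero objects with
`μ(Coim f) ≤ μ(Im f)` for every nonzero morphism `f` and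
`μ(M₁ ⊗ M₂) = μ(M₁) + μ(M₂)`, equipped with an anti-equivalence `(-)^∨ : C → C^op` with
`μ(M^∨) = -μ(M)` and a family of maps `u : C(𝟙, M₁ ⊗ M₂) → C(M₂^∨, M₁)` sending nonzero
morphisms to nonzero morphisms.  Then for any nonzero objects `M₁`, `M₂`:
`ν(M₁ ⊗ M₂) ≤ μ_max(M₁) + μ_max(M₂)`. -/
theorem nu_tensor_le {C : Type u} [Category.{v} C] [HasZeroMorphisms C] [HasZeroObject C]
    [HasKernels C] [HasCokernels C] [MonoidalCategory C]
    (μ : C → ℝ)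
    (hμ : ∀ {X Y : C} (f : X ⟶ Y), f ≠ 0 → μ (Coim f) ≤ μ (Im f))
    (hμtens : ∀ M₁ M₂ : C, ¬ IsZero M₁ → ¬ IsZero M₂ →
      ¬ IsZero (M₁ ⊗ M₂) ∧ μ (M₁ ⊗ M₂) = μ M₁ + μ M₂)
    (e : C ≌ Cᵒᵖ)
    (hμdual : ∀ M : C, ¬ IsZero M → μ ((e.functor.obj M).unop) = -μ M)
    (u : ∀ M₁ M₂ : C, (𝟙_ C ⟶ M₁ ⊗ M₂) → ((e.functor.obj M₂).unop ⟶ M₁))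
    (hu : ∀ (M₁ M₂ : C) (f : 𝟙_ C ⟶ M₁ ⊗ M₂), f ≠ 0 → u M₁ M₂ f ≠ 0)
    (M₁ M₂ : C) (h₁ : ¬ IsZero M₁) (h₂ : ¬ IsZero M₂) :
    nuE μ (M₁ ⊗ M₂) ≤ muMaxE μ M₁ + muMaxE μ M₂ := by
  refine sSup_le ?_
  rintro x ⟨L, f, hmf, hL, ⟨L', ⟨α⟩, ⟨β⟩⟩, rfl⟩
  haveI := hmf
  obtain ⟨Z₀, hZ₀⟩ := HasZeroObject.zero (C := C)
  -- `f` is nonzero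
  have hf0 : f ≠ 0 := by
    intro h
    apply hL
    rw [IsZero.iff_id_eq_zero]
    have : 𝟙 L ≫ f = (0 : L ⟶ L) ≫ f := by rw [h]; simp
    exact (cancel_mono f).mp this
  -- the nonzero morphism `g : 𝟙 ⟶ (L' ⊗ M₁) ⊗ M₂`
  set E : C := L' ⊗ M₁ with hE
  set g : 𝟙_ C ⟶ E ⊗ M₂ := β.inv ≫ (L' ◁ f) ≫ (α_ L' M₁ M₂).inv with hgdef
  have hg : g ≠ 0 := by
    intro h
    have h1 : β.inv ≫ (L' ◁ f) ≫ (α_ L' M₁ M₂).inv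
        = β.inv ≫ (0 : L' ⊗ L ⟶ L' ⊗ (M₁ ⊗ M₂)) ≫ (α_ L' M₁ M₂).inv := by
      rw [← hgdef, h]; simp
    have h2 := (cancel_epi β.inv).mp h1
    have h3 := (cancel_mono (α_ L' M₁ M₂).inv).mp h2
    exact whiskerLeft_ne_zero α β f hf0 h3
  -- the nonzero morphism `v : M₂^∨ ⟶ E` and its transport `v̂ : P ⟶ M₂`
  set v : (e.functor.obj M₂).unop ⟶ E := u E M₂ g with hvdef
  have hv : v ≠ 0 := hu E M₂ g hg
  set P : C := e.inverse.obj (Opposite.op E) with hP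
  set vhat : P ⟶ M₂ :=
    e.inverse.map v.op ≫ e.unitIso.inv.app M₂ with hvhat
  have hvhat0 : vhat ≠ 0 := by
    intro h
    have hmap : e.inverse.map v.op = 0 := by
      have : e.inverse.map v.op = vhat ≫ e.unitIso.hom.app M₂ := by
        rw [hvhat, Category.assoc]
        simp
      rw [this, h, zero_comp]
    have hvop : v.op ≠ 0 := by
      intro h'
      apply hv
      have := congrArg Quiver.Hom.unop h'
      simpa using this
    exact e.inverse.map_ne_zero (hZ₀.op) v.op hvop hmap
  -- apply the slope inequality to `v̂`
  have hineq := hμ vhat hvhat0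
  -- `N₂ := Im v̂` is a nonzero subobject of `M₂`
  set N₂ : C := Im vhat with hN₂
  have hN₂0 : ¬ IsZero N₂ := by
    intro hz
    apply hvhat0
    have : vhat = kernel.lift (cokernel.π vhat) vhat (cokernel.condition vhat)
        ≫ kernel.ι (cokernel.π vhat) := by rw [kernel.lift_ι]
    rw [this,
      show kernel.lift (cokernel.π vhat) vhat (cokernel.condition vhat)
          = (0 : P ⟶ N₂) from hz.eq_of_tgt _ _]
    exact zero_comp
  -- `R := Coim v̂` is nonzero
  set R : C := Coim vhat with hR
  have hR0 : ¬ IsZero R := by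
    intro hz
    apply hvhat0
    have : vhat = cokernel.π (kernel.ι vhat)
        ≫ cokernel.desc (kernel.ι vhat) vhat (kernel.condition vhat) := by
      rw [cokernel.π_desc]
    rw [this,
      show cokernel.desc (kernel.ι vhat) vhat (kernel.condition vhat)
          = (0 : R ⟶ M₂) from hz.eq_of_src _ _]
    exact comp_zero
  -- dualize the canonical epimorphism `P ↠ R`
  set DR : C := (e.functor.obj R).unop with hDR
  haveI hepi : Epi (e.functor.map (cokernel.π (kernel.ι vhat))) :=
    e.functor.map_epi _
  have hm'mono : Mono ((e.functor.map (cokernel.π (kernel.ι vhat))).unop) :=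
    unop_mono_of_epi _
  set m' : DR ⟶ (e.functor.obj P).unop :=
    (e.functor.map (cokernel.π (kernel.ι vhat))).unop with hm' 
  have hDR0 : ¬ IsZero DR := by
    intro hz
    apply hR0
    have h1 : IsZero (e.functor.obj R) := by
      have := hz.op
      simpa using this
    have h2 : IsZero (e.inverse.obj (e.functor.obj R)) :=
      e.inverse.isZero_obj_of_full h1
    exact h2.of_iso (e.unitIso.app R)
  have hμDR : μ DR = - μ R := hμdual R hR0
  -- the counit isomorphism `E ≅ DP`
  set ε : E ≅ (e.functor.obj P).unop := (e.counitIso.app (Opposite.op E)).unop with hε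
  -- the subobject `N₁ := L ⊗ DR` of `M₁`
  set N₁ : C := L ⊗ DR with hN₁
  set ι₁ : N₁ ⟶ M₁ := (L ◁ (m' ≫ ε.inv)) ≫ (sandIso L L' α M₁).hom with hι₁
  haveI hmono1 : Mono ι₁ := by
    haveI im0 : Mono m' := hm'mono
    haveI im1 : Mono ε.inv := IsIso.mono_of_iso _
    haveI im2 : Mono (m' ≫ ε.inv) := mono_comp _ _
    haveI im3 : Mono (L ◁ (m' ≫ ε.inv)) := mono_whiskerLeft α β _
    haveI im4 : Mono (sandIso L L' α M₁).hom := IsIso.mono_of_iso _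
    exact mono_comp _ _
  obtain ⟨hN₁0, hN₁μ⟩ := hμtens L DR hL hDR0
  -- conclude
  have le₁ : ((μ N₁ : ℝ) : EReal) ≤ muMaxE μ M₁ := le_sSup ⟨N₁, ι₁, hmono1, hN₁0, rfl⟩
  have le₂ : ((μ N₂ : ℝ) : EReal) ≤ muMaxE μ M₂ :=
    le_sSup ⟨N₂, kernel.ι (cokernel.π vhat), equalizer.ι_mono, hN₂0, rfl⟩
  calc ((μ L : ℝ) : EReal) ≤ ((μ N₁ + μ N₂ : ℝ) : EReal) := by
        apply EReal.coe_le_coe_iff.mpr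
        have : μ N₁ = μ L + μ DR := hN₁μ
        rw [this, hμDR]
        have : μ R ≤ μ N₂ := hineq
        linarith
    _ = ((μ N₁ : ℝ) : EReal) + ((μ N₂ : ℝ) : EReal) := EReal.coe_add _ _
    _ ≤ muMaxE μ M₁ + muMaxE μ M₂ := add_le_add le₁ le₂
end

section
/- Under the axioms below, for any nonzero objects M₁, M₂ of C one has μ_max(M₁ ⊗ M₂) ≤ ( μ_max(M₁) + ρ(M₁) ) + ( μ_max(M₂) + ρ(M₂) ). -/
open CategoryTheory CategoryTheory.Limits MonoidalCategory

open CategoryTheory CategoryTheory.Limits MonoidalCategory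


namespace CategoryTheory

section Helpers

open ZeroObject

universe w₁ w₂ u₁ u₂

variable {A : Type u₁} {B : Type u₂} [Category.{w₁} A] [Category.{w₂} B]

/-- An equivalence of categories sends zero objects to zero objects. -/
lemma Equivalence.isZero_obj (E : A ≌ B) {Z : A} (h : IsZero Z) :
    IsZero (E.functor.obj Z) := by
  constructor
  · intro Y
    haveI : Unique (Z ⟶ E.inverse.obj Y) := (h.unique_to _).some
    exact ⟨(E.toAdjunction.homEquiv Z Y).unique⟩
  · intro Y
    haveI : Unique (E.symm.functor.obj Y ⟶ Z) := (h.unique_from _).some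
    exact ⟨((E.symm.toAdjunction.homEquiv Y Z).symm).unique⟩

/-- An equivalence between categories with zero morphisms (the source having a zero object)
kills no nonzero morphism. -/
lemma Equivalence.map_eq_zero_iff [HasZeroMorphisms A] [HasZeroMorphisms B] [HasZeroObject A]
    (E : A ≌ B) {X Y : A} (f : X ⟶ Y) : E.functor.map f = 0 ↔ f = 0 := by
  have hz0 : E.functor.map (0 : X ⟶ Y) = 0 := by
    have h0 : (0 : X ⟶ Y) = (0 : X ⟶ (0 : A)) ≫ (0 : (0 : A) ⟶ Y) := by simp
    rw [h0, Functor.map_comp]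
    have hz : IsZero (E.functor.obj (0 : A)) := E.isZero_obj (isZero_zero A)
    rw [hz.eq_of_src (E.functor.map (0 : (0 : A) ⟶ Y)) 0]
    simp
  constructor
  · intro h
    exact E.functor.map_injective (by rw [h, hz0])
  · intro h
    rw [h, hz0]

end Helpers

end CategoryTheory

section Core

universe w uu

variable {C : Type uu} [Category.{w} C]

/-- The tensor equivalence induced by an invertible object: tensoring on the left by `L'`
is an equivalence with quasi-inverse tensoring on the left by `L`. -/
def tensorLeftEquiv [MonoidalCategory C] (L L' : C) (e₁ : L ⊗ L' ≅ 𝟙_ C)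
    (e₂ : L' ⊗ L ≅ 𝟙_ C) : C ≌ C :=
  CategoryTheory.Equivalence.mk (tensorLeft L') (tensorLeft L)
    ((leftUnitorNatIso C).symm ≪≫ (curriedTensor C).mapIso e₁.symm ≪≫ tensorLeftTensor L L')
    ((tensorLeftTensor L' L).symm ≪≫ (curriedTensor C).mapIso e₂ ≪≫ leftUnitorNatIso C)

/-- Core estimate: an invertible nonzero subobject `L` of `M₁ ⊗ M₂` satisfies
`μ(L) ≤ μ_max(M₁) + μ_max(M₂)`. -/
lemma core_bound [HasZeroMorphisms C]
    [HasZeroObject C] [HasKernels C] [HasCokernels C] [MonoidalCategory C]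
    (μ : C → ℝ)
    (hμ : ∀ {X Y : C} (f : X ⟶ Y), f ≠ 0 → μ (Coim f) ≤ μ (Im f))
    (hμtens : ∀ M₁ M₂ : C, ¬ IsZero M₁ → ¬ IsZero M₂ →
      ¬ IsZero (M₁ ⊗ M₂) ∧ μ (M₁ ⊗ M₂) = μ M₁ + μ M₂)
    (e : C ≌ Cᵒᵖ)
    (hμdual : ∀ M : C, ¬ IsZero M → μ ((e.functor.obj M).unop) = -μ M)
    (u : ∀ M₁ M₂ : C, (𝟙_ C ⟶ M₁ ⊗ M₂) → ((e.functor.obj M₂).unop ⟶ M₁))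
    (hu : ∀ (M₁ M₂ : C) (f : 𝟙_ C ⟶ M₁ ⊗ M₂), f ≠ 0 → u M₁ M₂ f ≠ 0)
    (M₁ M₂ : C)
    (L L' : C) (e₁ : L ⊗ L' ≅ 𝟙_ C) (e₂ : L' ⊗ L ≅ 𝟙_ C) (hL : ¬ IsZero L)
    (f : L ⟶ M₁ ⊗ M₂) (hf : Mono f) :
    (μ L : EReal) ≤ muMaxE μ M₁ + muMaxE μ M₂ := by
  classical
  -- the tensor equivalences
  have E : C ≌ C := tensorLeftEquiv L L' e₁ e₂
  haveI : (tensorLeft L').IsEquivalence :=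
    (tensorLeftEquiv L L' e₁ e₂).isEquivalence_functor
  haveI : (tensorLeft L).IsEquivalence :=
    (tensorLeftEquiv L L' e₁ e₂).isEquivalence_inverse
  -- f is nonzero
  have hf0 : f ≠ 0 := by
    intro h0
    apply hL
    rw [IsZero.iff_id_eq_zero]
    have : 𝟙 L ≫ f = 0 ≫ f := by rw [h0]; simp
    exact (cancel_mono f).mp this
  -- the nonzero morphism 𝟙 ⟶ (L' ⊗ M₁) ⊗ M₂
  set g : 𝟙_ C ⟶ (L' ⊗ M₁) ⊗ M₂ :=
    e₂.inv ≫ (tensorLeft L').map f ≫ (α_ L' M₁ M₂).inv with hgdef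
  have hg : g ≠ 0 := by
    intro h0
    have hx : (tensorLeft L').map f = e₂.hom ≫ g ≫ (α_ L' M₁ M₂).hom := by
      rw [hgdef]; simp
    rw [h0] at hx
    simp at hx
    exact hf0 (((tensorLeftEquiv L L' e₁ e₂).map_eq_zero_iff f).mp hx)
  -- apply u
  set h : (e.functor.obj M₂).unop ⟶ L' ⊗ M₁ := u (L' ⊗ M₁) M₂ g with hhdef
  have hh : h ≠ 0 := hu _ _ g hg
  -- transport to a morphism k : W ⟶ M₂
  set W : C := e.inverse.obj (Opposite.op (L' ⊗ M₁)) with hWdef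
  set k : W ⟶ M₂ := e.inverse.map h.op ≫ (e.unitIso.app M₂).inv with hkdef
  have hk : k ≠ 0 := by
    intro h0
    have hx : e.inverse.map h.op = k ≫ (e.unitIso.app M₂).hom := by
      rw [hkdef]; simp
    rw [h0, zero_comp] at hx
    have : h.op = 0 := (e.symm.map_eq_zero_iff h.op).mp hx
    apply hh
    have := congrArg Quiver.Hom.unop this
    simpa using this
  -- factorizations of k
  have hμk : μ (Coim k) ≤ μ (Im k) := hμ k hk
  set m : Im k ⟶ M₂ := kernel.ι (cokernel.π k) with hmdef
  set p : W ⟶ Im k := kernel.lift (cokernel.π k) k (cokernel.condition k) with hpdef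
  have hpm : p ≫ m = k := kernel.lift_ι _ _ _
  set π : W ⟶ Coim k := cokernel.π (kernel.ι k) with hπdef
  set l : Coim k ⟶ M₂ := cokernel.desc (kernel.ι k) k (kernel.condition k) with hldef
  have hπl : π ≫ l = k := cokernel.π_desc _ _ _
  have hIm : ¬ IsZero (Im k) := by
    intro hz
    apply hk
    rw [← hpm, hz.eq_of_src m 0, comp_zero]
  have hQ : ¬ IsZero (Coim k) := by
    intro hz
    apply hk
    rw [← hπl, hz.eq_of_src l 0, comp_zero]
  -- the image of k is a nonzero subobject of M₂
  have hb₂ : (μ (Im k) : EReal) ≤ muMaxE μ M₂ :=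
    le_sSup ⟨Im k, m, (show Mono (kernel.ι (cokernel.π k)) from inferInstance), hIm, rfl⟩
  -- dualize the coimage
  set D : C := (e.functor.obj (Coim k)).unop with hDdef
  have hD : ¬ IsZero D := by
    intro hz
    apply hQ
    have h1 : IsZero (e.functor.obj (Coim k)) := by
      have := hz.op
      simpa using this
    have h2 : IsZero ((e.functor ⋙ e.inverse).obj (Coim k)) := e.symm.isZero_obj h1
    exact h2.of_iso (e.unitIso.app (Coim k))
  have hμD : μ D = -μ (Coim k) := hμdual (Coim k) hQ
  -- D is a subobject of L' ⊗ M₁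
  haveI : Epi (e.functor.map π) := by
    haveI : Epi π := (show Epi (cokernel.π (kernel.ι k)) from inferInstance)
    exact e.functor.map_epi π
  set d₀ : D ⟶ (e.functor.obj W).unop := (e.functor.map π).unop with hd₀def
  haveI hd₀mono : Mono d₀ := inferInstance
  set cIso : (L' ⊗ M₁) ≅ (e.functor.obj W).unop :=
    (e.counitIso.app (Opposite.op (L' ⊗ M₁))).unop with hcdef
  set d : D ⟶ L' ⊗ M₁ := d₀ ≫ cIso.inv with hddef
  haveI : Mono cIso.inv := IsIso.mono_of_iso _
  haveI hdmono : Mono d := mono_comp _ _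
  -- tensor with L : L ⊗ D is a nonzero subobject of M₁
  obtain ⟨hLD, hμLD⟩ := hμtens L D hL hD
  haveI : Mono ((tensorLeft L).map d) := (tensorLeft L).map_mono d
  set j : L ⊗ (L' ⊗ M₁) ≅ M₁ :=
    (α_ L L' M₁).symm ≪≫ whiskerRightIso e₁ M₁ ≪≫ λ_ M₁ with hjdef
  haveI : Mono j.hom := IsIso.mono_of_iso _
  set t : L ⊗ D ⟶ M₁ := (tensorLeft L).map d ≫ j.hom with htdef
  haveI : Mono t := mono_comp _ _
  have hb₁ : (μ (L ⊗ D) : EReal) ≤ muMaxE μ M₁ :=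
    le_sSup ⟨L ⊗ D, t, inferInstance, hLD, rfl⟩
  -- combine
  have hreal : μ L ≤ μ (L ⊗ D) + μ (Im k) := by
    rw [hμLD, hμD]
    linarith
  calc (μ L : EReal) ≤ ((μ (L ⊗ D) + μ (Im k) : ℝ) : EReal) := by
        exact_mod_cast hreal
    _ = (μ (L ⊗ D) : EReal) + (μ (Im k) : EReal) := by
        rw [EReal.coe_add]
    _ ≤ muMaxE μ M₁ + muMaxE μ M₂ := add_le_add hb₁ hb₂

end Core

/-- In the setting of the axioms of §5 (monoidal category with zero object,
kernels and cokernels; `μ` with `μ(Coim f) ≤ μ(Im f)` for nonzero `f`, additive on tensor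
products; an anti-equivalence `(-)^∨` with `μ(M^∨) = -μ(M)`; maps
`u : C(𝟙, M₁ ⊗ M₂) → C(M₂^∨, M₁)` preserving nonzeroness), let `ρ` be a further real-valued
function on nonzero objects such that `ρ(N) ≤ ρ(M)` for every nonzero subobject `N` of `M`,
`ρ(M₁ ⊗ M₂) = ρ(M₁) + ρ(M₂)`, and `μ(M) ≤ ν(M) + ρ(M)` for every nonzero `M`.
Then for any nonzero objects `M₁`, `M₂`:

`μ_max(M₁ ⊗ M₂) ≤ (μ_max(M₁) + ρ(M₁)) + (μ_max(M₂) + ρ(M₂))`. -/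
theorem muMax_tensor_le_of_rho {C : Type u} [Category.{v} C] [HasZeroMorphisms C]
    [HasZeroObject C] [HasKernels C] [HasCokernels C] [MonoidalCategory C]
    (μ : C → ℝ)
    (hμ : ∀ {X Y : C} (f : X ⟶ Y), f ≠ 0 → μ (Coim f) ≤ μ (Im f))
    (hμtens : ∀ M₁ M₂ : C, ¬ IsZero M₁ → ¬ IsZero M₂ →
      ¬ IsZero (M₁ ⊗ M₂) ∧ μ (M₁ ⊗ M₂) = μ M₁ + μ M₂)
    (e : C ≌ Cᵒᵖ)
    (hμdual : ∀ M : C, ¬ IsZero M → μ ((e.functor.obj M).unop) = -μ M)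
    (u : ∀ M₁ M₂ : C, (𝟙_ C ⟶ M₁ ⊗ M₂) → ((e.functor.obj M₂).unop ⟶ M₁))
    (hu : ∀ (M₁ M₂ : C) (f : 𝟙_ C ⟶ M₁ ⊗ M₂), f ≠ 0 → u M₁ M₂ f ≠ 0)
    (ρ : C → ℝ)
    (hρmono : ∀ {N M : C} (f : N ⟶ M), Mono f → ¬ IsZero N → ¬ IsZero M → ρ N ≤ ρ M)
    (hρtens : ∀ M₁ M₂ : C, ¬ IsZero M₁ → ¬ IsZero M₂ → ρ (M₁ ⊗ M₂) = ρ M₁ + ρ M₂)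
    (hμν : ∀ M : C, ¬ IsZero M → (μ M : EReal) ≤ nuE μ M + (ρ M : EReal))
    (M₁ M₂ : C) (h₁ : ¬ IsZero M₁) (h₂ : ¬ IsZero M₂) :
    muMaxE μ (M₁ ⊗ M₂) ≤
      (muMaxE μ M₁ + (ρ M₁ : EReal)) + (muMaxE μ M₂ + (ρ M₂ : EReal)) := by
  classical
  have hM12 : ¬ IsZero (M₁ ⊗ M₂) := (hμtens M₁ M₂ h₁ h₂).1
  refine sSup_le ?_
  rintro x ⟨N, f, hmf, hN, rfl⟩
  -- bound on ν of N
  have hnu : nuE μ N ≤ muMaxE μ M₁ + muMaxE μ M₂ := by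
    refine sSup_le ?_
    rintro y ⟨L, g, hg, hL, ⟨L', ⟨i₁⟩, ⟨i₂⟩⟩, rfl⟩
    haveI := hg
    haveI := hmf
    haveI : Mono (g ≫ f) := mono_comp _ _
    exact core_bound μ hμ hμtens e hμdual u hu M₁ M₂ L L' i₁ i₂ hL (g ≫ f) inferInstance
  have hrho : (ρ N : EReal) ≤ ((ρ M₁ + ρ M₂ : ℝ) : EReal) := by
    have : ρ N ≤ ρ M₁ + ρ M₂ := by
      have h1 : ρ N ≤ ρ (M₁ ⊗ M₂) := hρmono f hmf hN hM12
      rw [hρtens M₁ M₂ h₁ h₂] at h1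
      exact h1
    exact_mod_cast this
  calc (μ N : EReal) ≤ nuE μ N + (ρ N : EReal) := hμν N hN
    _ ≤ (muMaxE μ M₁ + muMaxE μ M₂) + ((ρ M₁ + ρ M₂ : ℝ) : EReal) := add_le_add hnu hrho
    _ = (muMaxE μ M₁ + (ρ M₁ : EReal)) + (muMaxE μ M₂ + (ρ M₂ : EReal)) := by
        rw [EReal.coe_add]
        exact add_add_add_comm _ _ _ _
end

section
/- Under the axioms below, and assuming in addition that the tensor product of two monomorphisms of C is a monomorphism, for any nonzero objects M₁, M₂ of C one has μ_max(M₁) + μ_max(M₂) ≤ μ_max(M₁ ⊗ M₂). -/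
open CategoryTheory CategoryTheory.Limits MonoidalCategory

open CategoryTheory CategoryTheory.Limits MonoidalCategory

/-- Let `C` be an (essentially small) monoidal category with a zero object,
kernels and cokernels, and `μ` a real-valued function on its nonzero objects with
`μ(Coim f) ≤ μ(Im f)` for every nonzero morphism `f` and `μ(M₁ ⊗ M₂) = μ(M₁) + μ(M₂)`.
Assume in addition that the tensor product of two monomorphisms is a monomorphism.
Then for any nonzero objects `M₁`, `M₂`:
`μ_max(M₁) + μ_max(M₂) ≤ μ_max(M₁ ⊗ M₂)`. -/
theorem muMax_add_le_muMax_tensor {C : Type u} [Category.{v} C] [HasZeroMorphisms C]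
    [HasZeroObject C] [HasKernels C] [HasCokernels C] [MonoidalCategory C]
    (μ : C → ℝ)
    (hμ : ∀ {X Y : C} (f : X ⟶ Y), f ≠ 0 → μ (Coim f) ≤ μ (Im f))
    (hμtens : ∀ M₁ M₂ : C, ¬ IsZero M₁ → ¬ IsZero M₂ →
      ¬ IsZero (M₁ ⊗ M₂) ∧ μ (M₁ ⊗ M₂) = μ M₁ + μ M₂)
    (hmono : ∀ {X Y X' Y' : C} (f : X ⟶ Y) (g : X' ⟶ Y'),
      Mono f → Mono g → Mono (f ⊗ₘ g))
    (M₁ M₂ : C) (h₁ : ¬ IsZero M₁) (h₂ : ¬ IsZero M₂) :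
    muMaxE μ M₁ + muMaxE μ M₂ ≤ muMaxE μ (M₁ ⊗ M₂) := by
  apply EReal.add_le_of_forall_lt
  intro x hx y hy
  obtain ⟨a, ⟨N₁, f₁, hf₁, hN₁, rfl⟩, hxa⟩ := exists_lt_of_lt_csSup' hx
  obtain ⟨b, ⟨N₂, f₂, hf₂, hN₂, rfl⟩, hyb⟩ := exists_lt_of_lt_csSup' hy
  have hmem : ((μ N₁ + μ N₂ : ℝ) : EReal) ∈
      { x : EReal | ∃ (N : C) (f : N ⟶ M₁ ⊗ M₂), Mono f ∧ ¬ IsZero N ∧ x = (μ N : EReal) } := by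
    obtain ⟨hnz, heq⟩ := hμtens N₁ N₂ hN₁ hN₂
    exact ⟨N₁ ⊗ N₂, f₁ ⊗ₘ f₂, hmono f₁ f₂ hf₁ hf₂, hnz, by rw [heq]⟩
  calc x + y ≤ (μ N₁ : EReal) + (μ N₂ : EReal) := add_le_add hxa.le hyb.le
    _ = ((μ N₁ + μ N₂ : ℝ) : EReal) := by norm_cast
    _ ≤ muMaxE μ (M₁ ⊗ M₂) := le_sSup hmem
end
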